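/- arXiv:1603.08539 — 5 statements merged into one kernel-verified Lean document; each statement's English description precedes it below -/
import Mathlib

section
/- For 0 < q < p ≤ 1, any natural number n, and x ∈ [0,1), the following identity holds: 1 / ∏_{s=0}^{n}(p^s - q^s x) = p^{-n(n+1)/2} Σ_{k=0}^{∞} [n+k choose k]_{p,q} x^k p^{-kn}, where the series on the right converges. -/
open Filter Topology

noncomputable def pqInt (p q : ℝ) (n : ℕ) : ℝ := (p ^ n - q ^ n) / (p - q)

noncomputable def pqFact (p q : ℝ) (n : ℕ) : ℝ :=
  ∏ j ∈ Finset.range n, pqInt p q (j + 1)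

noncomputable def pqBinom (p q : ℝ) (n k : ℕ) : ℝ :=
  pqFact p q n / (pqFact p q k * pqFact p q (n - k))

noncomputable def mkz (p q : ℝ) (n : ℕ) (f : ℝ → ℝ) (x : ℝ) : ℝ :=
  if x = 1 then f 1 else
    (p ^ (n * (n + 1) / 2))⁻¹ *
      ∑' k : ℕ, pqBinom p q (n + k) k * x ^ k * (p ^ (k * n))⁻¹ *
        (∏ s ∈ Finset.range (n + 1), (p ^ s - q ^ s * x)) *
        f (p ^ n * pqInt p q k / pqInt p q (n + k))

noncomputable def supNorm (g : ℝ → ℝ) : ℝ :=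
  sSup ((fun x => |g x|) '' Set.Icc (0 : ℝ) 1)

noncomputable def modCont (f : ℝ → ℝ) (δ : ℝ) : ℝ :=
  sSup ((fun p : ℝ × ℝ => |f p.1 - f p.2|) ''
    {p : ℝ × ℝ | p.1 ∈ Set.Icc (0 : ℝ) 1 ∧ p.2 ∈ Set.Icc (0 : ℝ) 1 ∧ |p.1 - p.2| ≤ δ})

def StatLim (x : ℕ → ℝ) (L : ℝ) : Prop :=
  ∀ ε > 0, Filter.Tendsto
    (fun n => (((Finset.range (n + 1)).filter (fun k => ε ≤ |x k - L|)).card : ℝ) / (n : ℝ))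
    Filter.atTop (nhds 0)

section aux
variable {p q : ℝ}

lemma pqInt_pos (hq : 0 < q) (hqp : q < p) (m : ℕ) : 0 < pqInt p q (m + 1) := by
  have hp : 0 < p := hq.trans hqp
  have h1 : q ^ (m+1) < p ^ (m+1) := pow_lt_pow_left₀ hqp hq.le (by omega)
  exact div_pos (by linarith) (by linarith)

lemma pqFact_pos (hq : 0 < q) (hqp : q < p) (m : ℕ) : 0 < pqFact p q m :=
  Finset.prod_pos fun j _ => pqInt_pos hq hqp j

lemma pqFact_succ (m : ℕ) : pqFact p q (m + 1) = pqFact p q m * pqInt p q (m + 1) :=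
  Finset.prod_range_succ _ _

lemma pqInt_add (hpq : p ≠ q) (m r : ℕ) :
    pqInt p q (m + r) = p ^ r * pqInt p q m + q ^ m * pqInt p q r := by
  have h : p - q ≠ 0 := sub_ne_zero.2 hpq
  simp only [pqInt]
  field_simp
  ring

lemma pqBinom_ratio (hq : 0 < q) (hqp : q < p) (n k : ℕ) :
    pqBinom p q (n + (k + 1)) (k + 1) =
      pqBinom p q (n + k) k * (pqInt p q (n + k + 1) / pqInt p q (k + 1)) := by
  simp only [pqBinom]
  rw [show n + (k + 1) - (k + 1) = n from by omega,
    show n + (k + 1) = (n + k) + 1 from by omega,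
    show n + k - k = n from by omega, pqFact_succ, pqFact_succ]
  have hk := (pqFact_pos hq hqp k).ne'
  have hn := (pqFact_pos hq hqp n).ne'
  have hI := (pqInt_pos hq hqp k).ne'
  generalize pqFact p q (n + k) = a
  generalize pqFact p q k = b at *
  generalize pqFact p q n = c at *
  generalize pqInt p q (n + k + 1) = A
  generalize pqInt p q (k + 1) = B at *
  field_simp

lemma pqBinom_zero (hq : 0 < q) (hqp : q < p) (n : ℕ) : pqBinom p q n 0 = 1 := by
  have hn := (pqFact_pos hq hqp n).ne'
  simp only [pqBinom, Nat.sub_zero]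
  rw [show pqFact p q 0 = 1 from Finset.prod_range_zero _, one_mul, div_self hn]

lemma pqPascal (hq : 0 < q) (hqp : q < p) (n k : ℕ) :
    pqBinom p q (n + k + 2) (k + 1) =
      q ^ (n + 1) * pqBinom p q (n + k + 1) k +
        p ^ (k + 1) * pqBinom p q (n + k + 1) (k + 1) := by
  have e4 : pqInt p q (n + k + 2) =
      p ^ (k + 1) * pqInt p q (n + 1) + q ^ (n + 1) * pqInt p q (k + 1) := by
    have := pqInt_add (p := p) (q := q) (hqp.ne') (n + 1) (k + 1)
    rw [show n + 1 + (k + 1) = n + k + 2 by omega] at this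
    exact this
  simp only [pqBinom]
  rw [show n + k + 2 - (k + 1) = n + 1 from by omega,
    show n + k + 1 - k = n + 1 from by omega,
    show n + k + 1 - (k + 1) = n from by omega,
    show pqFact p q (n + k + 2) = pqFact p q (n + k + 1) * pqInt p q (n + k + 2) from
      pqFact_succ _,
    e4,
    show pqFact p q (k + 1) = pqFact p q k * pqInt p q (k + 1) from pqFact_succ _,
    show pqFact p q (n + 1) = pqFact p q n * pqInt p q (n + 1) from pqFact_succ _]
  have hk := (pqFact_pos hq hqp k).ne'
  have hn := (pqFact_pos hq hqp n).ne'
  have hIk := (pqInt_pos hq hqp k).ne'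
  have hIn := (pqInt_pos hq hqp n).ne'
  generalize pqFact p q (n + k + 1) = a
  generalize pqFact p q k = b at *
  generalize pqFact p q n = c at *
  generalize pqInt p q (k + 1) = B at *
  generalize pqInt p q (n + 1) = C at *
  generalize hP : (p : ℝ) ^ (k+1) = P
  generalize hQ : (q : ℝ) ^ (n+1) = Q
  field_simp
  ring

lemma pqInt_bridge (hq : 0 < q) (hqp : q < p) (m : ℕ) :
    pqInt p q (m + 1) = p ^ m * pqInt 1 (q / p) (m + 1) := by
  have hp : (0:ℝ) < p := hq.trans hqp
  have hpq : p - q ≠ 0 := sub_ne_zero.2 hqp.ne'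
  have h1 : (1 : ℝ) - q / p ≠ 0 := by
    have : q / p < 1 := (div_lt_one hp).2 hqp
    linarith
  simp only [pqInt, one_pow, div_pow]
  field_simp
  ring

lemma pqBinom_bridge (hq : 0 < q) (hqp : q < p) (n k : ℕ) :
    pqBinom p q (n + k) k = p ^ (k * n) * pqBinom 1 (q / p) (n + k) k := by
  have hp : (0:ℝ) < p := hq.trans hqp
  have ht0 : 0 < q / p := div_pos hq hp
  have ht1 : q / p < 1 := (div_lt_one hp).2 hqp
  induction k with
  | zero => simp [pqBinom_zero hq hqp, pqBinom_zero ht0 ht1]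
  | succ k ih =>
      rw [pqBinom_ratio hq hqp, pqBinom_ratio ht0 ht1, ih,
        pqInt_bridge hq hqp (n + k), pqInt_bridge hq hqp k]
      have hI1 := (pqInt_pos ht0 ht1 k).ne'
      have hpk : (p : ℝ) ^ k ≠ 0 := by positivity
      have hpn : (p : ℝ) ^ (n + k) ≠ 0 := by positivity
      generalize pqBinom 1 (q / p) (n + k) k = a
      generalize pqInt 1 (q / p) (n + k + 1) = A
      generalize pqInt 1 (q / p) (k + 1) = B at *
      rw [show (k+1) * n = k * n + n from by ring, pow_add, pow_add]
      field_simp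

end aux

section analytic
variable {t x : ℝ}

lemma pqInt_le (ht0 : 0 < t) (ht1 : t < 1) (m : ℕ) : pqInt 1 t m ≤ (1 - t)⁻¹ := by
  have h : (0:ℝ) < 1 - t := by linarith
  have hm : (0:ℝ) ≤ t ^ m := by positivity
  simp only [pqInt, one_pow]
  rw [inv_eq_one_div, div_le_div_iff₀ h h]
  nlinarith

lemma pqBinom_pos (ht0 : 0 < t) (ht1 : t < 1) (m k : ℕ) : 0 < pqBinom 1 t m k :=
  div_pos (pqFact_pos ht0 ht1 m) (mul_pos (pqFact_pos ht0 ht1 k) (pqFact_pos ht0 ht1 _))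

lemma pqBinom_refl (hq : 0 < q) (hqp : q < p) (k : ℕ) : pqBinom p q (0 + k) k = 1 := by
  have hk := (pqFact_pos hq hqp k).ne'
  simp only [pqBinom, Nat.zero_add, Nat.sub_self]
  rw [show pqFact p q 0 = 1 from Finset.prod_range_zero _, mul_one, div_self hk]

lemma pqBinom_le (ht0 : 0 < t) (ht1 : t < 1) (n k : ℕ) :
    pqBinom 1 t (n + k) k ≤ ((1 - t)⁻¹) ^ n / pqFact 1 t n := by
  have hFk := (pqFact_pos ht0 ht1 k).ne'
  have hFn := pqFact_pos ht0 ht1 n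
  have hsplit : pqFact 1 t (n + k) = pqFact 1 t k * ∏ j ∈ Finset.range n, pqInt 1 t (k + j + 1) := by
    rw [show n + k = k + n from by omega]
    simpa [pqFact] using Finset.prod_range_add (fun j => pqInt 1 t (j + 1)) k n
  have hP : (∏ j ∈ Finset.range n, pqInt 1 t (k + j + 1)) ≤ ((1 - t)⁻¹) ^ n := by
    calc (∏ j ∈ Finset.range n, pqInt 1 t (k + j + 1))
        ≤ ∏ _j ∈ Finset.range n, (1 - t)⁻¹ :=
          Finset.prod_le_prod (fun j _ => (pqInt_pos ht0 ht1 _).le)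
            (fun j _ => pqInt_le ht0 ht1 _)
      _ = ((1 - t)⁻¹) ^ n := by simp
  have heq : pqBinom 1 t (n + k) k = (∏ j ∈ Finset.range n, pqInt 1 t (k + j + 1)) / pqFact 1 t n := by
    simp only [pqBinom]
    rw [show n + k - k = n from by omega, hsplit]
    field_simp
  rw [heq]
  gcongr

lemma core_summable (ht0 : 0 < t) (ht1 : t < 1) (hx0 : 0 ≤ x) (hx1 : x < 1) (n : ℕ) :
    Summable (fun k : ℕ => pqBinom 1 t (n + k) k * x ^ k) := by
  refine Summable.of_nonneg_of_le
    (fun k => mul_nonneg (pqBinom_pos ht0 ht1 _ _).le (by positivity))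
    (fun k => mul_le_mul_of_nonneg_right (pqBinom_le ht0 ht1 n k) (by positivity))
    (((summable_geometric_of_lt_one hx0 hx1).mul_left (((1 - t)⁻¹) ^ n / pqFact 1 t n)))

lemma core_identity (ht0 : 0 < t) (ht1 : t < 1) (hx0 : 0 ≤ x) (hx1 : x < 1) (n : ℕ) :
    (∏ s ∈ Finset.range (n + 1), (1 - t ^ s * x))⁻¹ =
      ∑' k : ℕ, pqBinom 1 t (n + k) k * x ^ k := by
  have hfac : ∀ s : ℕ, 0 < 1 - t ^ s * x := by
    intro s
    have h1 : t ^ s ≤ 1 := pow_le_one₀ ht0.le ht1.le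
    have : t ^ s * x ≤ x := by nlinarith
    linarith
  induction n with
  | zero =>
      have hterm : ∀ k : ℕ, pqBinom 1 t (0 + k) k * x ^ k = x ^ k := by
        intro k
        rw [pqBinom_refl ht0 ht1, one_mul]
      rw [tsum_congr hterm, tsum_geometric_of_lt_one hx0 hx1]
      simp
  | succ n ih =>
      have ha : t ^ (n + 1) * x < 1 := by have := hfac (n + 1); linarith
      have hane : (1:ℝ) - t ^ (n + 1) * x ≠ 0 := (hfac (n + 1)).ne'
      have hF := core_summable ht0 ht1 hx0 hx1 (n + 1)
      have hG := core_summable ht0 ht1 hx0 hx1 n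
      have hGs : Summable (fun k : ℕ => pqBinom 1 t (n + (k + 1)) (k + 1) * x ^ (k + 1)) :=
        (summable_nat_add_iff (f := fun k : ℕ => pqBinom 1 t (n + k) k * x ^ k) 1).2 hG
      have hstep : ∀ k : ℕ,
          pqBinom 1 t (n + 1 + (k + 1)) (k + 1) * x ^ (k + 1) =
            (t ^ (n + 1) * x) * (pqBinom 1 t (n + 1 + k) k * x ^ k) +
              pqBinom 1 t (n + (k + 1)) (k + 1) * x ^ (k + 1) := by
        intro k
        rw [show n + 1 + (k + 1) = n + k + 2 from by omega, pqPascal ht0 ht1 n k,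
          show n + 1 + k = n + k + 1 from by omega, show n + (k + 1) = n + k + 1 from by omega,
          one_pow, pow_succ]
        ring
      have e0 : (∑' k : ℕ, pqBinom 1 t (n + 1 + k) k * x ^ k) =
          1 + ∑' k : ℕ, pqBinom 1 t (n + 1 + (k + 1)) (k + 1) * x ^ (k + 1) := by
        rw [Summable.tsum_eq_zero_add hF]
        congr 1
        simp [pqBinom_zero ht0 ht1]
      have eT : (∑' k : ℕ, pqBinom 1 t (n + 1 + (k + 1)) (k + 1) * x ^ (k + 1)) =
          (t ^ (n + 1) * x) * (∑' k : ℕ, pqBinom 1 t (n + 1 + k) k * x ^ k) +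
            ∑' k : ℕ, pqBinom 1 t (n + (k + 1)) (k + 1) * x ^ (k + 1) := by
        rw [← tsum_mul_left, ← Summable.tsum_add (hF.mul_left _) hGs]
        exact tsum_congr hstep
      have e3 : (∑' k : ℕ, pqBinom 1 t (n + k) k * x ^ k) =
          1 + ∑' k : ℕ, pqBinom 1 t (n + (k + 1)) (k + 1) * x ^ (k + 1) := by
        rw [Summable.tsum_eq_zero_add hG]
        congr 1
        simp [pqBinom_zero ht0 ht1]
      have key : (1 - t ^ (n + 1) * x) * (∑' k : ℕ, pqBinom 1 t (n + 1 + k) k * x ^ k) =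
          ∑' k : ℕ, pqBinom 1 t (n + k) k * x ^ k := by
        linear_combination e0 + eT - e3
      rw [Finset.prod_range_succ, mul_inv, ih, ← key]
      field_simp

end analytic

theorem pq_mkz_identity (p q : ℝ) (hq : 0 < q) (hqp : q < p) (hp : p ≤ 1)
    (n : ℕ) (x : ℝ) (hx : x ∈ Set.Ico (0 : ℝ) 1) :
    Summable (fun k : ℕ => pqBinom p q (n + k) k * x ^ k * (p ^ (k * n))⁻¹) ∧
    (∏ s ∈ Finset.range (n + 1), (p ^ s - q ^ s * x))⁻¹ =
      (p ^ (n * (n + 1) / 2))⁻¹ *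
        ∑' k : ℕ, pqBinom p q (n + k) k * x ^ k * (p ^ (k * n))⁻¹ := by

  obtain ⟨hx0, hx1⟩ := hx
  have hp0 : (0:ℝ) < p := hq.trans hqp
  have ht0 : 0 < q / p := div_pos hq hp0
  have ht1 : q / p < 1 := (div_lt_one hp0).2 hqp
  have hterm : ∀ k : ℕ, pqBinom p q (n + k) k * x ^ k * (p ^ (k * n))⁻¹ =
      pqBinom 1 (q / p) (n + k) k * x ^ k := by
    intro k
    rw [pqBinom_bridge hq hqp n k]
    have hpk : (p:ℝ) ^ (k * n) ≠ 0 := by positivity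
    field_simp
  have hsum := core_summable ht0 ht1 hx0 hx1 n
  constructor
  · exact hsum.congr fun k => (hterm k).symm
  · have hfac : ∀ s : ℕ, p ^ s - q ^ s * x = p ^ s * (1 - (q / p) ^ s * x) := by
      intro s
      have hq' : q = p * (q / p) := by field_simp
      rw [show q ^ s = p ^ s * (q / p) ^ s from by rw [← mul_pow, ← hq']]
      ring
    have hgauss : (∑ i ∈ Finset.range (n + 1), i) = n * (n + 1) / 2 := by
      have h2 : (∑ i ∈ Finset.range (n + 1), i) * 2 = n * (n + 1) := by
        rw [Finset.sum_range_id_mul_two]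
        simp [Nat.mul_comm]
      omega
    have hprod : (∏ s ∈ Finset.range (n + 1), (p ^ s - q ^ s * x)) =
        p ^ (n * (n + 1) / 2) * ∏ s ∈ Finset.range (n + 1), (1 - (q / p) ^ s * x) := by
      rw [Finset.prod_congr rfl (fun s _ => hfac s), Finset.prod_mul_distrib,
        Finset.prod_pow_eq_pow_sum, hgauss]
    rw [hprod, mul_inv, core_identity ht0 ht1 hx0 hx1 n]
    congr 1
    exact (tsum_congr hterm).symm
end

section
/- For 0 < q < p ≤ 1, natural number n, and any continuous function f on [0,1], the inequality |M_{n,p,q}(f; x) − f(x)| ≤ 2 ω(f, √(p^n / [n+1]_{p,q})) holds for all x ∈ [0,1], where ω denotes the modulus of continuity of f. -/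
open Filter Topology

set_option linter.unusedSectionVars false
set_option maxHeartbeats 1000000

namespace MKZ

variable (t : ℝ)

noncomputable def qi (m : ℕ) : ℝ := pqInt 1 t m
noncomputable def qF (m : ℕ) : ℝ := pqFact 1 t m
noncomputable def Qb (n k : ℕ) : ℝ := pqBinom 1 t (n + k) k
noncomputable def node (n k : ℕ) : ℝ := qi t k / qi t (n + k)
noncomputable def Pp (n : ℕ) (x : ℝ) : ℝ := ∏ s ∈ Finset.range (n + 1), (1 - t ^ s * x)

variable {t} (ht0 : 0 < t) (ht1 : t < 1)
include ht1

lemma qi_add (a b : ℕ) : qi t (a + b) = qi t a + t ^ a * qi t b := by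
  have h : (1 : ℝ) - t ≠ 0 := by linarith
  simp only [qi, pqInt, one_pow]
  field_simp
  ring

lemma qi_zero : qi t 0 = 0 := by simp [qi, pqInt]

lemma qi_one : qi t 1 = 1 := by
  have h : (1 : ℝ) - t ≠ 0 := by linarith
  simp [qi, pqInt]
  field_simp
  exact h

lemma qi_succ (m : ℕ) : qi t (m + 1) = qi t m + t ^ m := by
  have := qi_add ht1 m 1
  rw [this, qi_one ht1]; ring

lemma qi_succ' (m : ℕ) : qi t (m + 1) = 1 + t * qi t m := by
  have := qi_add ht1 1 m
  rw [show 1 + m = m + 1 from by omega] at this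
  rw [this, qi_one ht1]; ring

include ht0

lemma qi_nonneg (m : ℕ) : 0 ≤ qi t m := by
  induction m with
  | zero => simp [qi_zero ht1]
  | succ k ih =>
    rw [qi_succ ht1]
    positivity

lemma qi_one_le (m : ℕ) : 1 ≤ qi t (m + 1) := by
  rw [qi_succ' ht1]
  nlinarith [qi_nonneg ht0 ht1 m]

lemma qi_pos (m : ℕ) : 0 < qi t (m + 1) := lt_of_lt_of_le one_pos (qi_one_le ht0 ht1 m)

lemma qi_mono (m : ℕ) : qi t m ≤ qi t (m + 1) := by
  rw [qi_succ ht1]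
  nlinarith [pow_pos ht0 m]

lemma qi_le_add (m n : ℕ) : qi t m ≤ qi t (m + n) := by
  induction n with
  | zero => exact le_refl _
  | succ k ih => exact le_trans ih (qi_mono ht0 ht1 (m + k))

lemma qi_le_inv (m : ℕ) : qi t m ≤ (1 - t)⁻¹ := by
  have h : (0 : ℝ) < 1 - t := by linarith
  rw [qi, pqInt, one_pow, div_le_iff₀ h]
  rw [inv_mul_cancel₀ h.ne']
  nlinarith [pow_pos ht0 m]

lemma t_qi_le (m : ℕ) : t * qi t m ≤ qi t (m + 1) := by
  rw [qi_succ' ht1]; linarith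


set_option linter.unusedSectionVars false

lemma qF_zero : qF t 0 = 1 := by simp [qF, pqFact]

lemma qF_succ (m : ℕ) : qF t (m + 1) = qF t m * qi t (m + 1) := by
  simp [qF, pqFact, Finset.prod_range_succ, qi]

lemma qF_pos (m : ℕ) : 0 < qF t m := by
  induction m with
  | zero => rw [qF_zero ht0 ht1]; norm_num
  | succ k ih => rw [qF_succ ht0 ht1]; exact mul_pos ih (qi_pos ht0 ht1 k)

lemma Qb_eq (n k : ℕ) : Qb t n k = qF t (n + k) / (qF t k * qF t n) := by
  simp [Qb, pqBinom, qF, Nat.add_sub_cancel]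

lemma Qb_pos (n k : ℕ) : 0 < Qb t n k := by
  rw [Qb_eq ht0 ht1]
  exact div_pos (qF_pos ht0 ht1 _) (mul_pos (qF_pos ht0 ht1 _) (qF_pos ht0 ht1 _))

lemma Qb_zero (n : ℕ) : Qb t n 0 = 1 := by
  rw [Qb_eq ht0 ht1]
  rw [Nat.add_zero, qF_zero ht0 ht1]
  simp [div_self (qF_pos ht0 ht1 n).ne']

lemma Qb_zero' (k : ℕ) : Qb t 0 k = 1 := by
  rw [Qb_eq ht0 ht1, Nat.zero_add, qF_zero ht0 ht1]
  simp [div_self (qF_pos ht0 ht1 k).ne']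

lemma Qb_pascal (n k : ℕ) :
    Qb t (n + 1) (k + 1) = Qb t (n + 1) k + t ^ (k + 1) * Qb t n (k + 1) := by
  have e1 : qi t (n + 1 + (k + 1)) = qi t (k + 1) + t ^ (k + 1) * qi t (n + 1) := by
    rw [show n + 1 + (k + 1) = (k + 1) + (n + 1) from by omega]
    exact qi_add ht1 (k + 1) (n + 1)
  rw [Qb_eq ht0 ht1, Qb_eq ht0 ht1, Qb_eq ht0 ht1]
  rw [show n + 1 + (k + 1) = (n + 1 + k) + 1 from by omega, qF_succ ht0 ht1,
    show n + 1 + k = n + (k + 1) from by omega]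
  rw [show (k + 1 : ℕ) = k + 1 from rfl]
  have hk : qF t (k + 1) = qF t k * qi t (k + 1) := qF_succ ht0 ht1 k
  have hn : qF t (n + 1) = qF t n * qi t (n + 1) := qF_succ ht0 ht1 n
  rw [hk, hn]
  have h1 := (qF_pos ht0 ht1 k).ne'
  have h2 := (qF_pos ht0 ht1 n).ne'
  have h3 := (qi_pos ht0 ht1 k).ne'
  have h4 := (qi_pos ht0 ht1 n).ne'
  field_simp
  rw [show n + (k + 1) + 1 = n + 1 + (k + 1) from by omega, e1]
  ring

lemma Qb_succ_left (n k : ℕ) :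
    Qb t (n + 1) k * qi t (n + 1) = Qb t n k * qi t (n + k + 1) := by
  rw [Qb_eq ht0 ht1, Qb_eq ht0 ht1, qF_succ ht0 ht1 n,
    show n + 1 + k = (n + k) + 1 from by omega, qF_succ ht0 ht1 (n + k)]
  have h1 := (qF_pos ht0 ht1 k).ne'
  have h2 := (qF_pos ht0 ht1 n).ne'
  have h4 := (qi_pos ht0 ht1 n).ne'
  field_simp

lemma Qb_le (n k : ℕ) : Qb t n k ≤ ((1 - t)⁻¹) ^ n := by
  induction n with
  | zero => rw [Qb_zero' ht0 ht1]; simp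
  | succ m ih =>
    have h := Qb_succ_left ht0 ht1 m k
    have h1 : 0 < qi t (m + 1) := qi_pos ht0 ht1 m
    have h2 : Qb t (m + 1) k = Qb t m k * qi t (m + k + 1) / qi t (m + 1) := by
      field_simp
      linarith [h]
    rw [h2]
    have h3 : qi t (m + k + 1) ≤ (1 - t)⁻¹ := qi_le_inv ht0 ht1 _
    have h4 : 1 ≤ qi t (m + 1) := qi_one_le ht0 ht1 m
    have h5 : 0 < (1 - t)⁻¹ := by
      have : (0:ℝ) < 1 - t := by linarith
      positivity
    have hQ := (Qb_pos ht0 ht1 m k).le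
    calc Qb t m k * qi t (m + k + 1) / qi t (m + 1)
        ≤ Qb t m k * (1 - t)⁻¹ / 1 := by
          apply div_le_div₀ (by positivity) (by nlinarith) one_pos h4
      _ = Qb t m k * (1 - t)⁻¹ := by ring
      _ ≤ (1 - t)⁻¹ ^ m * (1 - t)⁻¹ := by nlinarith
      _ = (1 - t)⁻¹ ^ (m + 1) := by ring

lemma node_mul (n k : ℕ) : Qb t n (k + 1) * node t n (k + 1) = Qb t n k := by
  rw [node, Qb_eq ht0 ht1, Qb_eq ht0 ht1,
    show n + (k + 1) = (n + k) + 1 from by omega, qF_succ ht0 ht1 (n + k),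
    qF_succ ht0 ht1 k]
  have h1 := (qF_pos ht0 ht1 k).ne'
  have h2 := (qF_pos ht0 ht1 n).ne'
  have h3 := (qF_pos ht0 ht1 (n + k)).ne'
  have h4 := (qi_pos ht0 ht1 k).ne'
  have h5 := (qi_pos ht0 ht1 (n + k)).ne'
  field_simp

lemma node_nonneg (n k : ℕ) : 0 ≤ node t n k :=
  div_nonneg (qi_nonneg ht0 ht1 k) (qi_nonneg ht0 ht1 (n + k))

lemma node_le_one (n k : ℕ) : node t n k ≤ 1 := by
  cases k with
  | zero => rw [node, qi_zero ht1, zero_div]; norm_num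
  | succ m =>
    rw [node]
    apply div_le_one_of_le₀
    · exact qi_le_add ht0 ht1 (m + 1) n |>.trans_eq (by rw [show m + 1 + n = n + (m+1) from by omega])
    · exact qi_nonneg ht0 ht1 _

lemma node_step (n k : ℕ) : node t n (k + 1) ≤ (qi t (n + 1))⁻¹ + node t n k := by
  have hpos : 0 < qi t (n + k + 1) := qi_pos ht0 ht1 (n + k)
  have hpos1 : 0 < qi t (n + 1) := qi_pos ht0 ht1 n
  have h1 : node t n (k + 1) = qi t (k + 1) / qi t (n + k + 1) := by
    rw [node, show n + (k + 1) = n + k + 1 from by omega]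
  rw [h1, qi_succ' ht1 k, add_div]
  have e1 : 1 / qi t (n + k + 1) ≤ (qi t (n + 1))⁻¹ := by
    rw [one_div]
    apply inv_anti₀ hpos1
    have := qi_le_add ht0 ht1 (n + 1) k
    linarith [this.trans_eq (by rw [show n + 1 + k = n + k + 1 from by omega] : qi t (n+1+k) = qi t (n+k+1))]
  have e2 : t * qi t k / qi t (n + k + 1) ≤ node t n k := by
    rw [node]
    cases k with
    | zero => rw [qi_zero ht1]; simp
    | succ m =>
      have hk : 0 < qi t (n + (m + 1)) := by
        rw [show n + (m + 1) = (n + m) + 1 from by omega]; exact qi_pos ht0 ht1 _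
      rw [div_le_div_iff₀ hpos hk]
      have ht' : t * qi t (n + (m + 1)) ≤ qi t (n + (m + 1) + 1) := t_qi_le ht0 ht1 _
      have h6 : qi t (n + (m + 1) + 1) = qi t (n + (m + 1 + 1)) := by norm_num; ring_nf
      have h7 : 0 ≤ qi t (m + 1) := qi_nonneg ht0 ht1 _
      rw [show n + (m + 1) + 1 = n + (m + 1 + 1) from by omega] at ht'
      nlinarith [ht']
  linarith

lemma summable_aux (n : ℕ) {x : ℝ} (hx0 : 0 ≤ x) (hx1 : x < 1) (g : ℕ → ℝ) {C : ℝ}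
    (hg : ∀ k, |g k| ≤ C) : Summable (fun k => Qb t n k * x ^ k * g k) := by
  apply Summable.of_norm
  apply Summable.of_nonneg_of_le (fun k => norm_nonneg _) (fun k => ?_)
    (((summable_geometric_of_lt_one hx0 hx1).mul_left (((1 - t)⁻¹) ^ n * C)))
  have hC : 0 ≤ C := le_trans (abs_nonneg _) (hg 0)
  have h1 : 0 < Qb t n k := Qb_pos ht0 ht1 n k
  have h2 : Qb t n k ≤ ((1 - t)⁻¹) ^ n := Qb_le ht0 ht1 n k
  have h3 : (0:ℝ) ≤ x ^ k := pow_nonneg hx0 k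
  rw [Real.norm_eq_abs, abs_mul, abs_mul, abs_of_pos h1, abs_of_nonneg h3]
  calc Qb t n k * x ^ k * |g k| ≤ ((1 - t)⁻¹ ^ n) * x ^ k * C := by
        have h1t : (0:ℝ) < 1 - t := by linarith
        apply mul_le_mul _ (hg k) (abs_nonneg _) (by positivity)
        exact mul_le_mul_of_nonneg_right h2 h3
    _ = (1 - t)⁻¹ ^ n * C * x ^ k := by ring

lemma summable_base (n : ℕ) {x : ℝ} (hx0 : 0 ≤ x) (hx1 : x < 1) :
    Summable (fun k => Qb t n k * x ^ k) := by
  have := summable_aux ht0 ht1 n hx0 hx1 (fun _ => (1:ℝ)) (C := 1) (fun k => by norm_num)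
  simpa using this

lemma Pp_succ (n : ℕ) (x : ℝ) : Pp t (n + 1) x = (1 - x) * Pp t n (t * x) := by
  rw [Pp, Pp, Finset.prod_range_succ']
  simp only [pow_zero, one_mul]
  rw [mul_comm]
  congr 1
  apply Finset.prod_congr rfl
  intro s _
  rw [pow_succ]
  ring

lemma euler (n : ℕ) : ∀ x : ℝ, 0 ≤ x → x < 1 →
    (∑' k, Qb t n k * x ^ k) * Pp t n x = 1 := by
  induction n with
  | zero =>
    intro x hx0 hx1
    have h1 : ∀ k, Qb t 0 k * x ^ k = x ^ k := by
      intro k; rw [Qb_zero' ht0 ht1, one_mul]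
    rw [tsum_congr h1, tsum_geometric_of_lt_one hx0 hx1]
    simp only [Pp, zero_add, Finset.prod_range_one, pow_zero, one_mul]
    rw [inv_mul_cancel₀ (by linarith)]
  | succ m ih =>
    intro x hx0 hx1
    have htx0 : 0 ≤ t * x := by positivity
    have htx1 : t * x < 1 := by nlinarith
    set S := ∑' k, Qb t (m + 1) k * x ^ k with hS
    set S' := ∑' k, Qb t m k * (t * x) ^ k with hS'
    have hsum : Summable (fun k => Qb t (m + 1) k * x ^ k) := summable_base ht0 ht1 _ hx0 hx1
    have hsum' : Summable (fun k => Qb t m k * (t * x) ^ k) := summable_base ht0 ht1 _ htx0 htx1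
    have key : S = x * S + S' := by
      have h0 : S = 1 + ∑' k, Qb t (m + 1) (k + 1) * x ^ (k + 1) := by
        rw [hS, Summable.tsum_eq_zero_add hsum, Qb_zero ht0 ht1, pow_zero, mul_one]
      have h1 : ∀ k : ℕ, Qb t (m + 1) (k + 1) * x ^ (k + 1) =
          (Qb t (m + 1) k * x ^ k) * x + Qb t m (k + 1) * (t * x) ^ (k + 1) := by
        intro k
        rw [Qb_pascal ht0 ht1 m k]
        rw [mul_pow]
        ring
      have h2 : ∑' k, Qb t (m + 1) (k + 1) * x ^ (k + 1) =
          x * S + (S' - 1) := by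
        rw [tsum_congr h1, Summable.tsum_add (hsum.mul_right x) ?_]
        · congr 1
          · rw [tsum_mul_right, hS]; ring
          · have := Summable.tsum_eq_zero_add hsum'
            rw [Qb_zero ht0 ht1, pow_zero, mul_one] at this
            rw [hS']
            linarith [this]
        · have := (summable_base ht0 ht1 m htx0 htx1).comp_injective (add_right_injective 1)
          exact (summable_nat_add_iff (f := fun k => Qb t m k * (t * x) ^ k) 1).mpr
            (summable_base ht0 ht1 m htx0 htx1)
      rw [h2] at h0; linarith [h0]
    have key2 : S * (1 - x) = S' := by linear_combination key
    rw [Pp_succ ht0 ht1, ← mul_assoc, key2]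
    exact ih (t * x) htx0 htx1

lemma node_abs_le (n k : ℕ) : |node t n k| ≤ 1 := by
  rw [abs_of_nonneg (node_nonneg ht0 ht1 n k)]
  exact node_le_one ht0 ht1 n k

lemma node_zero (n : ℕ) : node t n 0 = 0 := by
  rw [node, qi_zero ht1, zero_div]

lemma S_nonneg (n : ℕ) {x : ℝ} (hx0 : 0 ≤ x) : 0 ≤ ∑' k, Qb t n k * x ^ k :=
  tsum_nonneg fun k => mul_nonneg (Qb_pos ht0 ht1 n k).le (pow_nonneg hx0 k)

lemma first_moment (n : ℕ) {x : ℝ} (hx0 : 0 ≤ x) (hx1 : x < 1) :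
    ∑' k, Qb t n k * x ^ k * node t n k = x * ∑' k, Qb t n k * x ^ k := by
  have hsum : Summable (fun k => Qb t n k * x ^ k * node t n k) :=
    summable_aux ht0 ht1 n hx0 hx1 _ (node_abs_le ht0 ht1 n)
  rw [Summable.tsum_eq_zero_add hsum]
  rw [node_zero ht0 ht1, mul_zero]
  have h1 : ∀ k : ℕ, Qb t n (k + 1) * x ^ (k + 1) * node t n (k + 1) =
      Qb t n k * x ^ k * x := by
    intro k
    have h := node_mul ht0 ht1 n k
    rw [pow_succ]
    linear_combination (x ^ k * x) * h
  rw [tsum_congr h1, tsum_mul_right]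
  ring

lemma second_moment (n : ℕ) {x : ℝ} (hx0 : 0 ≤ x) (hx1 : x < 1) :
    ∑' k, Qb t n k * x ^ k * (node t n k) ^ 2 ≤
      (qi t (n + 1))⁻¹ * x * (∑' k, Qb t n k * x ^ k) +
        x ^ 2 * (∑' k, Qb t n k * x ^ k) := by
  set c : ℝ := (qi t (n + 1))⁻¹ with hc
  have hcpos : 0 < c := by
    rw [hc]; exact inv_pos.mpr (qi_pos ht0 ht1 n)
  have hsum2 : Summable (fun k => Qb t n k * x ^ k * (node t n k) ^ 2) := by
    apply summable_aux ht0 ht1 n hx0 hx1 _ (C := 1)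
    intro k
    rw [abs_pow]
    calc |node t n k| ^ 2 ≤ 1 ^ 2 := by
          apply pow_le_pow_left₀ (abs_nonneg _) (node_abs_le ht0 ht1 n k)
      _ = 1 := one_pow 2
  rw [Summable.tsum_eq_zero_add hsum2]
  rw [node_zero ht0 ht1]
  rw [show Qb t n 0 * x ^ 0 * (0:ℝ) ^ 2 = 0 from by ring]
  have h1 : ∀ k : ℕ, Qb t n (k + 1) * x ^ (k + 1) * (node t n (k + 1)) ^ 2 =
      Qb t n k * x ^ k * (node t n (k + 1) * x) := by
    intro k
    have h := node_mul ht0 ht1 n k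
    rw [pow_succ]
    linear_combination (x ^ k * x * node t n (k + 1)) * h
  have hsL : Summable (fun k => Qb t n k * x ^ k * (node t n (k + 1) * x)) := by
    apply summable_aux ht0 ht1 n hx0 hx1 _ (C := 1)
    intro k
    rw [abs_mul]
    calc |node t n (k+1)| * |x| ≤ 1 * 1 := by
          apply mul_le_mul (node_abs_le ht0 ht1 n _) _ (abs_nonneg _) zero_le_one
          rw [abs_of_nonneg hx0]; exact hx1.le
      _ = 1 := one_mul 1
  have hsR : Summable (fun k => Qb t n k * x ^ k * ((c + node t n k) * x)) := by
    apply summable_aux ht0 ht1 n hx0 hx1 _ (C := (c + 1))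
    intro k
    rw [abs_mul]
    have h5 : |c + node t n k| ≤ c + 1 := by
      rw [abs_of_nonneg (by nlinarith [node_nonneg ht0 ht1 n k])]
      linarith [node_le_one ht0 ht1 n k]
    calc |c + node t n k| * |x| ≤ (c + 1) * 1 := by
          apply mul_le_mul h5 _ (abs_nonneg _) (by linarith)
          rw [abs_of_nonneg hx0]; exact hx1.le
      _ = c + 1 := mul_one _
  have hstep : ∀ k : ℕ, Qb t n k * x ^ k * (node t n (k + 1) * x) ≤
      Qb t n k * x ^ k * ((c + node t n k) * x) := by
    intro k
    apply mul_le_mul_of_nonneg_left _ (mul_nonneg (Qb_pos ht0 ht1 n k).le (pow_nonneg hx0 k))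
    apply mul_le_mul_of_nonneg_right _ hx0
    have := node_step ht0 ht1 n k
    linarith
  have hmain : ∑' k, Qb t n k * x ^ k * ((c + node t n k) * x) =
      c * x * (∑' k, Qb t n k * x ^ k) + x * (∑' k, Qb t n k * x ^ k * node t n k) := by
    have hexp : ∀ k : ℕ, Qb t n k * x ^ k * ((c + node t n k) * x) =
        (Qb t n k * x ^ k) * (c * x) + (Qb t n k * x ^ k * node t n k) * x := by
      intro k; ring
    rw [tsum_congr hexp, Summable.tsum_add ((summable_base ht0 ht1 n hx0 hx1).mul_right _)
      ((summable_aux ht0 ht1 n hx0 hx1 _ (node_abs_le ht0 ht1 n)).mul_right _),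
      tsum_mul_right, tsum_mul_right]
    ring
  calc (0 + ∑' k, Qb t n (k + 1) * x ^ (k + 1) * (node t n (k + 1)) ^ 2 : ℝ) =
      ∑' k, Qb t n k * x ^ k * (node t n (k + 1) * x) := by
        rw [zero_add, tsum_congr h1]
    _ ≤ ∑' k, Qb t n k * x ^ k * ((c + node t n k) * x) := Summable.tsum_le_tsum hstep hsL hsR
    _ = c * x * (∑' k, Qb t n k * x ^ k) + x * (∑' k, Qb t n k * x ^ k * node t n k) := hmain
    _ = c * x * (∑' k, Qb t n k * x ^ k) + x ^ 2 * (∑' k, Qb t n k * x ^ k) := by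
        rw [first_moment ht0 ht1 n hx0 hx1]; ring

lemma variance (n : ℕ) {x : ℝ} (hx0 : 0 ≤ x) (hx1 : x < 1) :
    ∑' k, Qb t n k * x ^ k * (node t n k - x) ^ 2 ≤
      (∑' k, Qb t n k * x ^ k) * (qi t (n + 1))⁻¹ := by
  set S := ∑' k, Qb t n k * x ^ k with hS
  have hSnn : 0 ≤ S := S_nonneg ht0 ht1 n hx0
  have sF0 : Summable (fun k => Qb t n k * x ^ k) := summable_base ht0 ht1 n hx0 hx1
  have sF1 : Summable (fun k => Qb t n k * x ^ k * node t n k) :=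
    summable_aux ht0 ht1 n hx0 hx1 _ (node_abs_le ht0 ht1 n)
  have sF2 : Summable (fun k => Qb t n k * x ^ k * (node t n k) ^ 2) := by
    apply summable_aux ht0 ht1 n hx0 hx1 _ (C := 1)
    intro k
    rw [abs_pow]
    calc |node t n k| ^ 2 ≤ 1 ^ 2 := by
          apply pow_le_pow_left₀ (abs_nonneg _) (node_abs_le ht0 ht1 n k)
      _ = 1 := one_pow 2
  have hexp : ∀ k : ℕ, Qb t n k * x ^ k * (node t n k - x) ^ 2 =
      Qb t n k * x ^ k * (node t n k) ^ 2 -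
        (2 * x) * (Qb t n k * x ^ k * node t n k) + x ^ 2 * (Qb t n k * x ^ k) := by
    intro k; ring
  have hsplit : ∑' k, Qb t n k * x ^ k * (node t n k - x) ^ 2 =
      (∑' k, Qb t n k * x ^ k * (node t n k) ^ 2) - (2 * x) *
        (∑' k, Qb t n k * x ^ k * node t n k) + x ^ 2 * S := by
    rw [tsum_congr hexp]
    rw [Summable.tsum_add (sF2.sub (sF1.mul_left (2 * x))) (sF0.mul_left (x ^ 2)),
      Summable.tsum_sub sF2 (sF1.mul_left (2 * x)), tsum_mul_left, tsum_mul_left]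
  rw [hsplit, first_moment ht0 ht1 n hx0 hx1]
  have h2 := second_moment ht0 ht1 n hx0 hx1
  have hc : 0 < (qi t (n + 1))⁻¹ := inv_pos.mpr (qi_pos ht0 ht1 n)
  rw [← hS] at h2 ⊢
  nlinarith [h2, hSnn, hc.le, hx1.le, hx0,
    mul_nonneg (mul_nonneg hc.le hSnn) (by linarith : (0:ℝ) ≤ 1 - x)]

end MKZ




namespace MKZ

variable {f : ℝ → ℝ} (hf : ContinuousOn f (Set.Icc 0 1)) {δ : ℝ}
include hf

lemma modCont_bdd (δ : ℝ) : BddAbove ((fun p : ℝ × ℝ => |f p.1 - f p.2|) ''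
    {p : ℝ × ℝ | p.1 ∈ Set.Icc (0 : ℝ) 1 ∧ p.2 ∈ Set.Icc (0 : ℝ) 1 ∧ |p.1 - p.2| ≤ δ}) := by
  obtain ⟨M, hM⟩ := isCompact_Icc.exists_bound_of_continuousOn hf
  refine ⟨2 * M, ?_⟩
  rintro y ⟨⟨a, b⟩, ⟨ha, hb, -⟩, rfl⟩
  have h1 := hM a ha
  have h2 := hM b hb
  simp only [Real.norm_eq_abs] at h1 h2
  calc |f a - f b| ≤ |f a| + |f b| := abs_sub _ _
    _ ≤ 2 * M := by linarith

lemma pair_le (hδ : 0 ≤ δ) {a b : ℝ} (ha : a ∈ Set.Icc (0:ℝ) 1) (hb : b ∈ Set.Icc (0:ℝ) 1)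
    (hab : |a - b| ≤ δ) : |f a - f b| ≤ modCont f δ :=
  le_csSup (modCont_bdd hf δ) ⟨(a, b), ⟨ha, hb, hab⟩, rfl⟩

lemma modCont_nonneg (hδ : 0 ≤ δ) : 0 ≤ modCont f δ := by
  have := pair_le hf hδ (a := 0) (b := 0) (by norm_num) (by norm_num) (by simpa using hδ)
  simpa using this

lemma mod_bound (hδ : 0 < δ) {s y : ℝ} (hs : s ∈ Set.Icc (0:ℝ) 1)
    (hy : y ∈ Set.Icc (0:ℝ) 1) :
    |f s - f y| ≤ (1 + (s - y) ^ 2 / δ ^ 2) * modCont f δ := by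
  have hK0 : 0 ≤ modCont f δ := modCont_nonneg hf hδ.le
  set K := modCont f δ with hK
  set r := |s - y| / δ with hr
  have hr0 : 0 ≤ r := div_nonneg (abs_nonneg _) hδ.le
  set m := ⌈r⌉₊ with hm
  have hfac : (0:ℝ) ≤ 1 + (s - y) ^ 2 / δ ^ 2 := by positivity
  by_cases hsy : s = y
  · subst hsy
    simpa using mul_nonneg hfac hK0
  have hrpos : 0 < r := by
    apply div_pos _ hδ
    rw [abs_pos]
    exact sub_ne_zero_of_ne hsy
  have hm1 : 1 ≤ m := Nat.one_le_ceil_iff.mpr hrpos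
  have hmpos : (0:ℝ) < m := by exact_mod_cast hm1
  have hrm : r ≤ m := Nat.le_ceil r
  -- chain points
  set a : ℕ → ℝ := fun i => y + i * ((s - y) / m) with haa
  have ha0 : a 0 = y := by simp [haa]
  have ham : a m = s := by
    simp only [haa]
    field_simp
    ring
  have hmem : ∀ i : ℕ, i ≤ m → a i ∈ Set.Icc (0:ℝ) 1 := by
    intro i hi
    have hil : (0:ℝ) ≤ (i:ℝ) / m := by positivity
    have hiu : (i:ℝ) / m ≤ 1 := by
      rw [div_le_one hmpos]; exact_mod_cast hi
    have hai : a i = (1 - i / m) * y + (i / m) * s := by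
      simp only [haa]; field_simp; ring
    obtain ⟨hy0, hy1⟩ := hy
    obtain ⟨hs0, hs1⟩ := hs
    constructor
    · rw [hai]; nlinarith
    · rw [hai]; nlinarith
  have hgap : ∀ i : ℕ, |a (i + 1) - a i| ≤ δ := by
    intro i
    have : a (i + 1) - a i = (s - y) / m := by
      simp only [haa, Nat.cast_add, Nat.cast_one]; ring
    rw [this, abs_div, abs_of_pos hmpos, div_le_iff₀ hmpos]
    have : |s - y| = r * δ := by rw [hr]; field_simp
    rw [this]
    calc r * δ ≤ (m:ℝ) * δ := mul_le_mul_of_nonneg_right hrm hδ.le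
      _ = δ * m := by ring
  have key : |f s - f y| ≤ m * K := by
    have htel : f s - f y = ∑ i ∈ Finset.range m, (f (a (i + 1)) - f (a i)) := by
      rw [Finset.sum_range_sub (fun i => f (a i)) m, ha0, ham]
    rw [htel]
    calc |∑ i ∈ Finset.range m, (f (a (i + 1)) - f (a i))| ≤
        ∑ i ∈ Finset.range m, |f (a (i + 1)) - f (a i)| := Finset.abs_sum_le_sum_abs _ _
      _ ≤ ∑ i ∈ Finset.range m, K := by
          apply Finset.sum_le_sum
          intro i hi
          have hi' := Finset.mem_range.mp hi
          exact pair_le hf hδ.le (hmem (i + 1) (by omega)) (hmem i (by omega)) (hgap i)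
      _ = m * K := by rw [Finset.sum_const, Finset.card_range, nsmul_eq_mul]
  have hmle : (m:ℝ) ≤ 1 + (s - y) ^ 2 / δ ^ 2 := by
    rcases le_or_gt r 1 with h | h
    · have : m ≤ 1 := by
        rw [hm]
        exact Nat.ceil_le.mpr (by simpa using h)
      have : (m:ℝ) ≤ 1 := by exact_mod_cast this
      have hsq : 0 ≤ (s - y) ^ 2 / δ ^ 2 := by positivity
      linarith
    · have h1 : (m:ℝ) < r + 1 := Nat.ceil_lt_add_one hr0
      have h2 : r ≤ r ^ 2 := by nlinarith
      have h3 : r ^ 2 = (s - y) ^ 2 / δ ^ 2 := by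
        rw [hr, div_pow, sq_abs]
      linarith
  calc |f s - f y| ≤ m * K := key
    _ ≤ (1 + (s - y) ^ 2 / δ ^ 2) * K := mul_le_mul_of_nonneg_right hmle hK0
end MKZ

namespace MKZ
section Reduction

variable {p q : ℝ} (hq : 0 < q) (hqp : q < p) (hp : p ≤ 1)
include hq hqp

lemma hp0 : 0 < p := lt_trans hq hqp
lemma ht0' : 0 < q / p := div_pos hq (hp0 hq hqp)
lemma ht1' : q / p < 1 := (div_lt_one (hp0 hq hqp)).mpr hqp

lemma pqInt_red (m : ℕ) : p * pqInt p q m = p ^ m * qi (q / p) m := by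
  have hp' : (0:ℝ) < p := hp0 hq hqp
  have h1 : p - q ≠ 0 := by linarith
  have h2 : (1:ℝ) - q / p ≠ 0 := by
    have := ht1' hq hqp; linarith
  rw [pqInt, qi, pqInt, one_pow, div_pow]
  field_simp

lemma pqInt_red' (m : ℕ) : pqInt p q (m + 1) = p ^ m * qi (q / p) (m + 1) := by
  have hp' : (0:ℝ) < p := hp0 hq hqp
  have h := pqInt_red hq hqp (m + 1)
  rw [pow_succ] at h
  have : p * pqInt p q (m + 1) = p * (p ^ m * qi (q / p) (m + 1)) := by
    rw [h]; ring
  exact mul_left_cancel₀ hp'.ne' this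

lemma pqInt_pos (m : ℕ) : 0 < pqInt p q (m + 1) := by
  have hp' : (0:ℝ) < p := hp0 hq hqp
  rw [pqInt_red' hq hqp]
  exact mul_pos (pow_pos hp' m) (qi_pos (ht0' hq hqp) (ht1' hq hqp) m)

lemma pqFact_red (m : ℕ) :
    pqFact p q m = p ^ (∑ j ∈ Finset.range m, j) * qF (q / p) m := by
  induction m with
  | zero => simp [pqFact, qF]
  | succ k ih =>
    rw [pqFact, Finset.prod_range_succ, ← pqFact, ih, pqInt_red' hq hqp,
      Finset.sum_range_succ, pow_add, qF_succ (ht0' hq hqp) (ht1' hq hqp)]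
    ring

omit hq hqp in
lemma exp_split (n k : ℕ) : (∑ j ∈ Finset.range (n + k), j) =
    k * n + (∑ j ∈ Finset.range k, j) + (∑ j ∈ Finset.range n, j) := by
  induction k with
  | zero => simp
  | succ m ih =>
    rw [show n + (m + 1) = (n + m) + 1 from by omega, Finset.sum_range_succ, ih,
      Finset.sum_range_succ]
    ring

lemma pqBinom_red (n k : ℕ) :
    pqBinom p q (n + k) k = p ^ (k * n) * Qb (q / p) n k := by
  have hp' : (0:ℝ) < p := hp0 hq hqp
  have ht0 := ht0' hq hqp
  have ht1 := ht1' hq hqp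
  rw [pqBinom, Nat.add_sub_cancel, pqFact_red hq hqp, pqFact_red hq hqp,
    pqFact_red hq hqp, Qb_eq ht0 ht1, exp_split, pow_add, pow_add]
  have h1 := (qF_pos ht0 ht1 k).ne'
  have h2 := (qF_pos ht0 ht1 n).ne'
  have h3 : (p : ℝ) ^ (∑ j ∈ Finset.range k, j) ≠ 0 := (pow_pos hp' _).ne'
  have h4 : (p : ℝ) ^ (∑ j ∈ Finset.range n, j) ≠ 0 := (pow_pos hp' _).ne'
  field_simp

lemma prod_red (n : ℕ) (x : ℝ) :
    ∏ s ∈ Finset.range (n + 1), (p ^ s - q ^ s * x) =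
      p ^ (∑ j ∈ Finset.range (n + 1), j) * Pp (q / p) n x := by
  have hp' : (0:ℝ) < p := hp0 hq hqp
  rw [Pp, ← Finset.prod_pow_eq_pow_sum, ← Finset.prod_mul_distrib]
  apply Finset.prod_congr rfl
  intro s _
  have h3 : (p : ℝ) ^ s ≠ 0 := (pow_pos hp' _).ne'
  rw [div_pow]
  field_simp

lemma node_red (n k : ℕ) :
    p ^ n * pqInt p q k / pqInt p q (n + k) = node (q / p) n k := by
  have hp' : (0:ℝ) < p := hp0 hq hqp
  have ht0 := ht0' hq hqp
  have ht1 := ht1' hq hqp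
  cases k with
  | zero =>
    rw [node, qi_zero ht1, zero_div, pqInt, pow_zero, pow_zero, sub_self, zero_div,
      mul_zero, zero_div]
  | succ m =>
    rw [node, pqInt_red' hq hqp m, show n + (m + 1) = (n + m) + 1 from by omega,
      pqInt_red' hq hqp (n + m)]
    rw [show n + m + 1 = n + (m + 1) from by omega]
    have h1 : qi (q / p) (n + (m + 1)) ≠ 0 := by
      rw [show n + (m + 1) = (n + m) + 1 from by omega]
      exact (qi_pos ht0 ht1 (n + m)).ne'
    have h3 : (p : ℝ) ^ m ≠ 0 := (pow_pos hp' _).ne'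
    have h4 : (p : ℝ) ^ (n + m) ≠ 0 := (pow_pos hp' _).ne'
    have h5 : (p:ℝ) ^ n ≠ 0 := (pow_pos hp' _).ne'
    rw [pow_add, mul_assoc]
    rw [mul_div_mul_left _ _ h5, mul_div_mul_left _ _ h3]

lemma gauss (n : ℕ) : p ^ (n * (n + 1) / 2) = p ^ (∑ j ∈ Finset.range (n + 1), j) := by
  congr 1
  rw [Finset.sum_range_id]
  simp [Nat.mul_comm]

lemma mkz_red (n : ℕ) (f : ℝ → ℝ) {x : ℝ} (hx1 : x ≠ 1) :
    mkz p q n f x = ∑' k, Qb (q / p) n k * x ^ k * (Pp (q / p) n x * f (node (q / p) n k)) := by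
  have hp' : (0:ℝ) < p := hp0 hq hqp
  rw [mkz, if_neg hx1]
  have hterm : ∀ k : ℕ, pqBinom p q (n + k) k * x ^ k * (p ^ (k * n))⁻¹ *
      (∏ s ∈ Finset.range (n + 1), (p ^ s - q ^ s * x)) *
      f (p ^ n * pqInt p q k / pqInt p q (n + k)) =
      p ^ (∑ j ∈ Finset.range (n + 1), j) *
        (Qb (q / p) n k * x ^ k * (Pp (q / p) n x * f (node (q / p) n k))) := by
    intro k
    rw [pqBinom_red hq hqp, prod_red hq hqp, node_red hq hqp]
    have h3 : (p : ℝ) ^ (k * n) ≠ 0 := (pow_pos hp' _).ne'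
    field_simp
  rw [tsum_congr hterm, tsum_mul_left, gauss hq hqp, ← mul_assoc,
    inv_mul_cancel₀ (pow_pos hp' _).ne', one_mul]

end Reduction

end MKZ

theorem mkz_modulus (p q : ℝ) (hq : 0 < q) (hqp : q < p) (hp : p ≤ 1)
    (n : ℕ) (f : ℝ → ℝ) (hf : ContinuousOn f (Set.Icc 0 1))
    (x : ℝ) (hx : x ∈ Set.Icc (0 : ℝ) 1) :
    |mkz p q n f x - f x| ≤
      2 * modCont f (Real.sqrt (p ^ n / pqInt p q (n + 1))) := by
  have hp' : (0:ℝ) < p := lt_trans hq hqp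
  set t := q / p with htdef
  have ht0 : 0 < t := MKZ.ht0' hq hqp
  have ht1 : t < 1 := MKZ.ht1' hq hqp
  have hqi : 0 < MKZ.qi t (n + 1) := MKZ.qi_pos ht0 ht1 n
  have hdval : p ^ n / pqInt p q (n + 1) = (MKZ.qi t (n + 1))⁻¹ := by
    rw [MKZ.pqInt_red' hq hqp n, div_mul_eq_div_div, div_self (pow_pos hp' n).ne', one_div]
  set δ := Real.sqrt (p ^ n / pqInt p q (n + 1)) with hδdef
  have hδpos : 0 < δ := Real.sqrt_pos.mpr (by rw [hdval]; positivity)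
  have hδsq : δ ^ 2 = (MKZ.qi t (n + 1))⁻¹ := by
    rw [hδdef, Real.sq_sqrt (by rw [hdval]; positivity), hdval]
  have hK0 : 0 ≤ modCont f δ := MKZ.modCont_nonneg hf hδpos.le
  set K := modCont f δ with hKdef
  by_cases hx1 : x = 1
  · subst hx1
    rw [mkz, if_pos rfl, sub_self, abs_zero]
    linarith
  obtain ⟨hx0, hxle⟩ := hx
  have hxlt : x < 1 := lt_of_le_of_ne hxle hx1
  rw [MKZ.mkz_red hq hqp n f hx1]
  set P := MKZ.Pp t n x with hPdef
  have hPpos : 0 < P := by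
    rw [hPdef, MKZ.Pp]
    apply Finset.prod_pos
    intro s _
    have h1 : t ^ s ≤ 1 := pow_le_one₀ ht0.le ht1.le
    have h2 : 0 < t ^ s := pow_pos ht0 s
    nlinarith
  have heuler : (∑' k, MKZ.Qb t n k * x ^ k) * P = 1 := MKZ.euler ht0 ht1 n x hx0 hxlt
  set S := ∑' k, MKZ.Qb t n k * x ^ k with hSdef
  obtain ⟨M, hM⟩ := isCompact_Icc.exists_bound_of_continuousOn hf
  simp only [Real.norm_eq_abs] at hM
  have hnode : ∀ k, MKZ.node t n k ∈ Set.Icc (0:ℝ) 1 := fun k =>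
    ⟨MKZ.node_nonneg ht0 ht1 n k, MKZ.node_le_one ht0 ht1 n k⟩
  have s0 : Summable (fun k => MKZ.Qb t n k * x ^ k) := MKZ.summable_base ht0 ht1 n hx0 hxlt
  have sG : Summable (fun k => MKZ.Qb t n k * x ^ k * (P * f (MKZ.node t n k))) := by
    apply MKZ.summable_aux ht0 ht1 n hx0 hxlt _ (C := P * M)
    intro k
    rw [abs_mul, abs_of_pos hPpos]
    exact mul_le_mul_of_nonneg_left (hM _ (hnode k)) hPpos.le
  have sVar : Summable (fun k => MKZ.Qb t n k * x ^ k * (MKZ.node t n k - x) ^ 2) := by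
    apply MKZ.summable_aux ht0 ht1 n hx0 hxlt _ (C := 1)
    intro k
    rw [abs_pow]
    have h1 : |MKZ.node t n k - x| ≤ 1 := by
      rw [abs_le]
      obtain ⟨ha, hb⟩ := hnode k
      constructor <;> nlinarith
    calc |MKZ.node t n k - x| ^ 2 ≤ 1 ^ 2 := pow_le_pow_left₀ (abs_nonneg _) h1 2
      _ = 1 := one_pow 2
  have hfx : ∑' k, MKZ.Qb t n k * x ^ k * (P * f x) = f x := by
    rw [tsum_mul_right, ← hSdef]
    linear_combination (f x) * heuler
  have hdiff : (∑' k, MKZ.Qb t n k * x ^ k * (P * f (MKZ.node t n k))) - f x =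
      ∑' k, MKZ.Qb t n k * x ^ k * (P * (f (MKZ.node t n k) - f x)) := by
    rw [show (∑' k, MKZ.Qb t n k * x ^ k * (P * f (MKZ.node t n k))) - f x =
        (∑' k, MKZ.Qb t n k * x ^ k * (P * f (MKZ.node t n k))) -
          (∑' k, MKZ.Qb t n k * x ^ k * (P * f x)) from by rw [hfx],
      ← Summable.tsum_sub sG (s0.mul_right (P * f x))]
    apply tsum_congr
    intro k
    ring
  rw [hdiff]
  have hVbd : (∑' k, MKZ.Qb t n k * x ^ k * (MKZ.node t n k - x) ^ 2) ≤
      S * (MKZ.qi t (n + 1))⁻¹ := MKZ.variance ht0 ht1 n hx0 hxlt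
  set V := ∑' k, MKZ.Qb t n k * x ^ k * (MKZ.node t n k - x) ^ 2 with hVdef
  have hterm : ∀ k, |MKZ.Qb t n k * x ^ k * (P * (f (MKZ.node t n k) - f x))| ≤
      MKZ.Qb t n k * x ^ k * (P * ((1 + (MKZ.node t n k - x) ^ 2 / δ ^ 2) * K)) := by
    intro k
    have h0 : 0 ≤ MKZ.Qb t n k * x ^ k :=
      mul_nonneg (MKZ.Qb_pos ht0 ht1 n k).le (pow_nonneg hx0 k)
    rw [abs_mul, abs_of_nonneg h0, abs_mul, abs_of_pos hPpos]
    apply mul_le_mul_of_nonneg_left _ h0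
    apply mul_le_mul_of_nonneg_left _ hPpos.le
    exact MKZ.mod_bound hf hδpos (hnode k) ⟨hx0, hxle⟩
  have sbound : Summable (fun k => MKZ.Qb t n k * x ^ k *
      (P * ((1 + (MKZ.node t n k - x) ^ 2 / δ ^ 2) * K))) := by
    apply MKZ.summable_aux ht0 ht1 n hx0 hxlt _ (C := P * ((1 + 1 / δ ^ 2) * K))
    intro k
    have h1 : |MKZ.node t n k - x| ≤ 1 := by
      rw [abs_le]
      obtain ⟨ha, hb⟩ := hnode k
      constructor <;> nlinarith
    have h2 : (MKZ.node t n k - x) ^ 2 ≤ 1 := by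
      calc (MKZ.node t n k - x) ^ 2 = |MKZ.node t n k - x| ^ 2 := (sq_abs _).symm
        _ ≤ 1 ^ 2 := pow_le_pow_left₀ (abs_nonneg _) h1 2
        _ = 1 := one_pow 2
    have h3 : (0:ℝ) ≤ (MKZ.node t n k - x) ^ 2 := sq_nonneg _
    have h4 : (0:ℝ) < δ ^ 2 := by positivity
    rw [abs_of_nonneg (by positivity)]
    apply mul_le_mul_of_nonneg_left _ hPpos.le
    apply mul_le_mul_of_nonneg_right _ hK0
    have h5 : (MKZ.node t n k - x) ^ 2 / δ ^ 2 ≤ 1 / δ ^ 2 :=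
      (div_le_div_iff_of_pos_right h4).mpr h2
    linarith
  have habs : |∑' k, MKZ.Qb t n k * x ^ k * (P * (f (MKZ.node t n k) - f x))| ≤
      ∑' k, |MKZ.Qb t n k * x ^ k * (P * (f (MKZ.node t n k) - f x))| := by
    have sabs : Summable (fun k => |MKZ.Qb t n k * x ^ k * (P * (f (MKZ.node t n k) - f x))|) := by
      apply Summable.of_nonneg_of_le (fun k => abs_nonneg _) hterm sbound
    have hn := norm_tsum_le_tsum_norm
      (f := fun k => MKZ.Qb t n k * x ^ k * (P * (f (MKZ.node t n k) - f x)))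
      (by simp only [Real.norm_eq_abs]; exact sabs)
    simp only [Real.norm_eq_abs] at hn
    exact hn
  have hsplit : ∑' k, MKZ.Qb t n k * x ^ k *
      (P * ((1 + (MKZ.node t n k - x) ^ 2 / δ ^ 2) * K)) =
      S * (P * K) + V * (P * K / δ ^ 2) := by
    have hexp : ∀ k, MKZ.Qb t n k * x ^ k *
        (P * ((1 + (MKZ.node t n k - x) ^ 2 / δ ^ 2) * K)) =
        (MKZ.Qb t n k * x ^ k) * (P * K) +
          (MKZ.Qb t n k * x ^ k * (MKZ.node t n k - x) ^ 2) * (P * K / δ ^ 2) := by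
      intro k
      field_simp
    rw [tsum_congr hexp, Summable.tsum_add (s0.mul_right _) (sVar.mul_right _),
      tsum_mul_right, tsum_mul_right, ← hSdef, ← hVdef]
  have sabs2 : Summable (fun k => |MKZ.Qb t n k * x ^ k * (P * (f (MKZ.node t n k) - f x))|) :=
    Summable.of_nonneg_of_le (fun k => abs_nonneg _) hterm sbound
  have hchain : (∑' k, |MKZ.Qb t n k * x ^ k * (P * (f (MKZ.node t n k) - f x))|) ≤
      S * (P * K) + V * (P * K / δ ^ 2) := by
    rw [← hsplit]
    exact Summable.tsum_le_tsum hterm sabs2 sbound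
  have e1 : S * (P * K) = K := by linear_combination K * heuler
  have e2 : V * (P * K / δ ^ 2) ≤ K := by
    have h1 : P * V ≤ δ ^ 2 := by
      calc P * V ≤ P * (S * (MKZ.qi t (n + 1))⁻¹) := mul_le_mul_of_nonneg_left hVbd hPpos.le
        _ = (S * P) * (MKZ.qi t (n + 1))⁻¹ := by ring
        _ = (MKZ.qi t (n + 1))⁻¹ := by rw [heuler, one_mul]
        _ = δ ^ 2 := hδsq.symm
    have hKd : (0:ℝ) ≤ K / δ ^ 2 := by positivity
    calc V * (P * K / δ ^ 2) = (P * V) * (K / δ ^ 2) := by ring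
      _ ≤ δ ^ 2 * (K / δ ^ 2) := mul_le_mul_of_nonneg_right h1 hKd
      _ = K := by field_simp
  calc |∑' k, MKZ.Qb t n k * x ^ k * (P * (f (MKZ.node t n k) - f x))| ≤
      ∑' k, |MKZ.Qb t n k * x ^ k * (P * (f (MKZ.node t n k) - f x))| := habs
    _ ≤ S * (P * K) + V * (P * K / δ ^ 2) := hchain
    _ ≤ K + K := by rw [e1]; linarith [e2]
    _ = 2 * K := by ring
end

section
/- Let 0 < q_n < p_n ≤ 1 be sequences such that p_n → 1 and q_n → 1 (so that p_n^n/[n+1]_{p_n,q_n} + (p_n − 1) → 0 in the statistical sense). If st-lim_n ‖M_{n,p_n,q_n}(f_i; ·) − f_i‖_{C[0,1]} = 0 for the test functions f_i(x) = x^i, i = 0, 1, 2, then st-lim_n ‖M_{n,p_n,q_n}(f; ·) − f‖_{C[0,1]} = 0 for every f ∈ C[0,1]. -/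
open Filter Topology

section Basic

variable {P Q : ℝ} {n k m : ℕ}

lemma pqInt_nonneg (hQ : 0 ≤ Q) (hQP : Q < P) (m : ℕ) : 0 ≤ pqInt P Q m := by
  apply div_nonneg _ (by linarith)
  have := pow_le_pow_left₀ hQ hQP.le m
  linarith

lemma pqInt_pos_s12 (hQ : 0 ≤ Q) (hQP : Q < P) (m : ℕ) (hm : m ≠ 0) : 0 < pqInt P Q m := by
  apply div_pos _ (by linarith)
  have := pow_lt_pow_left₀ hQP hQ hm
  linarith

lemma pqInt_le_s12 (hQ : 0 ≤ Q) (hQP : Q < P) (m : ℕ) : pqInt P Q m ≤ P ^ m / (P - Q) := by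
  unfold pqInt
  apply div_le_div_of_nonneg_right ?_ (by linarith)
  have : 0 ≤ Q ^ m := pow_nonneg hQ m
  linarith

lemma pqFact_pos_s12 (hQ : 0 ≤ Q) (hQP : Q < P) (n : ℕ) : 0 < pqFact P Q n := by
  apply Finset.prod_pos
  intro j _
  exact pqInt_pos_s12 hQ hQP _ (Nat.succ_ne_zero j)

lemma pqBinom_nonneg (hQ : 0 ≤ Q) (hQP : Q < P) (n k : ℕ) : 0 ≤ pqBinom P Q n k := by
  exact div_nonneg (pqFact_pos_s12 hQ hQP _).le
    (mul_nonneg (pqFact_pos_s12 hQ hQP _).le (pqFact_pos_s12 hQ hQP _).le)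

end Basic
section Binom

variable {P Q : ℝ}

lemma sum_aux (n k : ℕ) : ∑ j ∈ Finset.range n, (k + j + 1) = k * n + n * (n + 1) / 2 := by
  have h1 : ∑ j ∈ Finset.range n, (k + j + 1) = n * k + ∑ j ∈ Finset.range n, (j + 1) := by
    have : ∀ j, k + j + 1 = k + (j + 1) := fun j => by omega
    simp only [this, Finset.sum_add_distrib, Finset.sum_const, Finset.card_range, smul_eq_mul]
  have h2 : (∑ j ∈ Finset.range n, (j + 1)) * 2 = n * (n + 1) := by
    have := Finset.sum_range_id_mul_two (n + 1)
    rw [Finset.sum_range_succ'] at this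
    simpa [mul_comm] using this
  have h3 : (n * (n + 1) / 2) * 2 = n * (n + 1) :=
    Nat.div_mul_cancel (Nat.even_mul_succ_self n).two_dvd
  have h4 : (∑ j ∈ Finset.range n, (j + 1)) = n * (n + 1) / 2 :=
    Nat.eq_of_mul_eq_mul_right (by norm_num) (h2.trans h3.symm)
  rw [h1, h4, mul_comm]

lemma pqBinom_eq (hQ : 0 < Q) (hQP : Q < P) (n k : ℕ) :
    pqBinom P Q (n + k) k = (∏ j ∈ Finset.range n, pqInt P Q (k + j + 1)) / pqFact P Q n := by
  unfold pqBinom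
  rw [Nat.add_sub_cancel]
  have hsplit : pqFact P Q (n + k)
      = pqFact P Q k * ∏ j ∈ Finset.range n, pqInt P Q (k + j + 1) := by
    unfold pqFact
    rw [add_comm n k, Finset.prod_range_add]
  rw [hsplit]
  exact mul_div_mul_left _ _ (pqFact_pos_s12 hQ.le hQP k).ne'

lemma pqBinom_le_s12 (hQ : 0 < Q) (hQP : Q < P) (n k : ℕ) :
    pqBinom P Q (n + k) k
      ≤ P ^ (k * n) * P ^ (n * (n + 1) / 2) / ((P - Q) ^ n * pqFact P Q n) := by
  rw [pqBinom_eq hQ hQP]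
  have hPQ : (0:ℝ) < P - Q := by linarith
  have hfact := pqFact_pos_s12 hQ.le hQP n
  have hprod : (∏ j ∈ Finset.range n, pqInt P Q (k + j + 1))
      ≤ (∏ j ∈ Finset.range n, P ^ (k + j + 1) / (P - Q)) := by
    apply Finset.prod_le_prod
    · intro j _; exact pqInt_nonneg hQ.le hQP _
    · intro j _; exact pqInt_le_s12 hQ.le hQP _
  have hprod2 : (∏ j ∈ Finset.range n, P ^ (k + j + 1) / (P - Q))
      = P ^ (k * n) * P ^ (n * (n + 1) / 2) / (P - Q) ^ n := by
    rw [Finset.prod_div_distrib, Finset.prod_pow_eq_pow_sum, sum_aux, pow_add,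
      Finset.prod_const, Finset.card_range]
  calc (∏ j ∈ Finset.range n, pqInt P Q (k + j + 1)) / pqFact P Q n
      ≤ (P ^ (k * n) * P ^ (n * (n + 1) / 2) / (P - Q) ^ n) / pqFact P Q n := by
        apply div_le_div_of_nonneg_right (hprod.trans_eq hprod2) hfact.le
    _ = P ^ (k * n) * P ^ (n * (n + 1) / 2) / ((P - Q) ^ n * pqFact P Q n) := by
        rw [div_div]

end Binom

lemma abs_tsum_le' (g : ℕ → ℝ) (S : Summable fun k => |g k|) : |∑' k, g k| ≤ ∑' k, |g k| := by
  have S' : Summable fun k => ‖g k‖ := by simpa [Real.norm_eq_abs] using S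
  simpa [Real.norm_eq_abs] using norm_tsum_le_tsum_norm S'
noncomputable def prodT (P Q x : ℝ) (n : ℕ) : ℝ :=
  ∏ s ∈ Finset.range (n + 1), (P ^ s - Q ^ s * x)

noncomputable def aCoef (P Q x : ℝ) (n k : ℕ) : ℝ :=
  pqBinom P Q (n + k) k * x ^ k * (P ^ (k * n))⁻¹ * prodT P Q x n

noncomputable def tNode (P Q : ℝ) (n k : ℕ) : ℝ :=
  P ^ n * pqInt P Q k / pqInt P Q (n + k)

noncomputable def mkzK (P Q : ℝ) (n : ℕ) : ℝ :=
  P ^ (n * (n + 1) / 2) / ((P - Q) ^ n * pqFact P Q n)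

lemma mkz_eq (P Q x : ℝ) (n : ℕ) (f : ℝ → ℝ) (hx : x ≠ 1) :
    mkz P Q n f x
      = (P ^ (n * (n + 1) / 2))⁻¹ * ∑' k : ℕ, aCoef P Q x n k * f (tNode P Q n k) := by
  unfold mkz aCoef tNode prodT
  rw [if_neg hx]

section Core

variable {P Q x : ℝ} {n : ℕ}

lemma fact_le (hQ : 0 < Q) (hQP : Q < P) (n : ℕ) :
    (P - Q) ^ n * pqFact P Q n ≤ P ^ (n * (n + 1) / 2) := by
  have hPQ : (0:ℝ) < P - Q := by linarith
  have h1 : pqFact P Q n ≤ ∏ j ∈ Finset.range n, P ^ (j + 1) / (P - Q) := by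
    apply Finset.prod_le_prod (fun j _ => pqInt_nonneg hQ.le hQP _)
      (fun j _ => pqInt_le_s12 hQ.le hQP _)
  have h2 : ∏ j ∈ Finset.range n, P ^ (j + 1) / (P - Q)
      = P ^ (n * (n + 1) / 2) / (P - Q) ^ n := by
    rw [Finset.prod_div_distrib, Finset.prod_pow_eq_pow_sum, Finset.prod_const,
      Finset.card_range]
    have hs : ∑ i ∈ Finset.range n, (i + 1) = n * (n + 1) / 2 := by simpa using sum_aux n 0
    rw [hs]
  have := h1.trans_eq h2
  calc (P - Q) ^ n * pqFact P Q n
      ≤ (P - Q) ^ n * (P ^ (n * (n + 1) / 2) / (P - Q) ^ n) := by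
        apply mul_le_mul_of_nonneg_left this (by positivity)
    _ = P ^ (n * (n + 1) / 2) := by field_simp

lemma mkzK_ge_one (hQ : 0 < Q) (hQP : Q < P) (n : ℕ) : 1 ≤ mkzK P Q n := by
  have hPQ : (0:ℝ) < P - Q := by linarith
  have hD : 0 < (P - Q) ^ n * pqFact P Q n := by
    exact mul_pos (by positivity) (pqFact_pos_s12 hQ.le hQP n)
  exact (one_le_div hD).mpr (fact_le hQ hQP n)

lemma mkzK_pos (hQ : 0 < Q) (hQP : Q < P) (n : ℕ) : 0 < mkzK P Q n :=
  lt_of_lt_of_le one_pos (mkzK_ge_one hQ hQP n)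

lemma prodT_nonneg (hQ : 0 < Q) (hQP : Q < P) (hx0 : 0 ≤ x) (hx1 : x ≤ 1) (n : ℕ) :
    0 ≤ prodT P Q x n := by
  apply Finset.prod_nonneg
  intro s _
  have h1 : Q ^ s * x ≤ Q ^ s := by nlinarith [pow_nonneg hQ.le s]
  have h2 : Q ^ s ≤ P ^ s := pow_le_pow_left₀ hQ.le hQP.le s
  linarith

lemma prodT_le (hQ : 0 < Q) (hQP : Q < P) (hP1 : P ≤ 1) (hx0 : 0 ≤ x) (hx1 : x ≤ 1) (n : ℕ) :
    prodT P Q x n ≤ (1 - x) * P ^ (n * (n + 1) / 2) := by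
  unfold prodT
  rw [Finset.prod_range_succ']
  simp only [pow_zero, one_mul]
  rw [mul_comm]
  apply mul_le_mul_of_nonneg_left ?_ (by linarith)
  calc ∏ s ∈ Finset.range n, (P ^ (s + 1) - Q ^ (s + 1) * x)
      ≤ ∏ s ∈ Finset.range n, P ^ (s + 1) := by
        apply Finset.prod_le_prod
        · intro s _
          have h1 : Q ^ (s+1) * x ≤ Q ^ (s+1) := by nlinarith [pow_nonneg hQ.le (s+1)]
          have h2 : Q ^ (s+1) ≤ P ^ (s+1) := pow_le_pow_left₀ hQ.le hQP.le (s+1)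
          linarith
        · intro s _
          nlinarith [pow_nonneg hQ.le (s+1), mul_nonneg (pow_nonneg hQ.le (s+1)) hx0]
    _ = P ^ (n * (n + 1) / 2) := by
        rw [Finset.prod_pow_eq_pow_sum]
        have hs : ∑ i ∈ Finset.range n, (i + 1) = n * (n + 1) / 2 := by
          simpa using sum_aux n 0
        rw [hs]

lemma tNode_mem (hQ : 0 < Q) (hQP : Q < P) (n k : ℕ) :
    tNode P Q n k ∈ Set.Icc (0:ℝ) 1 := by
  have hPQ : (0:ℝ) < P - Q := by linarith
  constructor
  · exact div_nonneg (mul_nonneg (pow_nonneg (by linarith) n) (pqInt_nonneg hQ.le hQP k))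
      (pqInt_nonneg hQ.le hQP (n + k))
  · rcases Nat.eq_zero_or_pos k with hk | hk
    · subst hk
      unfold tNode pqInt
      simp
    · have hnk : 0 < pqInt P Q (n + k) := pqInt_pos_s12 hQ.le hQP _ (by omega)
      rw [tNode, div_le_one hnk]
      have hiden : pqInt P Q (n + k) = P ^ n * pqInt P Q k + Q ^ k * pqInt P Q n := by
        unfold pqInt
        field_simp
        ring
      have : 0 ≤ Q ^ k * pqInt P Q n :=
        mul_nonneg (pow_nonneg hQ.le k) (pqInt_nonneg hQ.le hQP n)
      linarith [hiden]

lemma aCoef_nonneg (hQ : 0 < Q) (hQP : Q < P) (hx0 : 0 ≤ x) (hx1 : x ≤ 1) (n k : ℕ) :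
    0 ≤ aCoef P Q x n k := by
  unfold aCoef
  have hP : (0:ℝ) < P := hQ.trans hQP
  apply mul_nonneg (mul_nonneg (mul_nonneg (pqBinom_nonneg hQ.le hQP _ _)
    (pow_nonneg hx0 k)) (by positivity)) (prodT_nonneg hQ hQP hx0 hx1 n)

lemma aCoef_le (hQ : 0 < Q) (hQP : Q < P) (hx0 : 0 ≤ x) (hx1 : x ≤ 1) (n k : ℕ) :
    aCoef P Q x n k
      ≤ (P ^ (n * (n + 1) / 2) * prodT P Q x n / ((P - Q) ^ n * pqFact P Q n)) * x ^ k := by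
  unfold aCoef
  have hP : (0:ℝ) < P := hQ.trans hQP
  have hPQ : (0:ℝ) < P - Q := by linarith
  have hD : 0 < (P - Q) ^ n * pqFact P Q n := mul_pos (by positivity) (pqFact_pos_s12 hQ.le hQP n)
  have hb := pqBinom_le_s12 hQ hQP n k
  have hxk : (0:ℝ) ≤ x ^ k := pow_nonneg hx0 k
  have hpi : (0:ℝ) ≤ prodT P Q x n := prodT_nonneg hQ hQP hx0 hx1 n
  have hpkn : (0:ℝ) < (P ^ (k * n))⁻¹ := by positivity
  calc pqBinom P Q (n + k) k * x ^ k * (P ^ (k * n))⁻¹ * prodT P Q x n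
      ≤ (P ^ (k * n) * P ^ (n * (n + 1) / 2) / ((P - Q) ^ n * pqFact P Q n)) * x ^ k
          * (P ^ (k * n))⁻¹ * prodT P Q x n := by
        apply mul_le_mul_of_nonneg_right _ hpi
        apply mul_le_mul_of_nonneg_right _ hpkn.le
        exact mul_le_mul_of_nonneg_right hb hxk
    _ = (P ^ (n * (n + 1) / 2) * prodT P Q x n / ((P - Q) ^ n * pqFact P Q n)) * x ^ k := by
        field_simp

end Core
section Core2

variable {P Q x : ℝ} {n : ℕ}

lemma Mnonneg {g : ℝ → ℝ} {M : ℝ} (hg : ∀ t ∈ Set.Icc (0:ℝ) 1, |g t| ≤ M) : 0 ≤ M :=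
  le_trans (abs_nonneg _) (hg 0 (by norm_num))

lemma summable_aCoef_mul (hQ : 0 < Q) (hQP : Q < P) (hx0 : 0 ≤ x) (hx1 : x < 1)
    (g : ℝ → ℝ) (M : ℝ) (hg : ∀ t ∈ Set.Icc (0:ℝ) 1, |g t| ≤ M) :
    Summable (fun k => aCoef P Q x n k * g (tNode P Q n k)) := by
  set C := P ^ (n * (n + 1) / 2) * prodT P Q x n / ((P - Q) ^ n * pqFact P Q n) with hC
  have hC0 : 0 ≤ C := by
    have hPQ : (0:ℝ) < P - Q := by linarith
    have hP : (0:ℝ) < P := hQ.trans hQP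
    have := prodT_nonneg hQ hQP hx0 hx1.le n
    have := pqFact_pos_s12 hQ.le hQP n
    positivity
  apply Summable.of_norm_bounded
    (((summable_geometric_of_lt_one hx0 hx1).mul_left (C * M)))
  intro k
  rw [Real.norm_eq_abs, abs_mul, abs_of_nonneg (aCoef_nonneg hQ hQP hx0 hx1.le n k)]
  calc aCoef P Q x n k * |g (tNode P Q n k)|
      ≤ (C * x ^ k) * M := by
        apply mul_le_mul (aCoef_le hQ hQP hx0 hx1.le n k)
          (hg _ (tNode_mem hQ hQP n k)) (abs_nonneg _)
          (by positivity)
    _ = (C * M) * x ^ k := by ring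

lemma tsum_aCoef_le (hQ : 0 < Q) (hQP : Q < P) (hP1 : P ≤ 1) (hx0 : 0 ≤ x) (hx1 : x < 1) :
    ∑' k : ℕ, aCoef P Q x n k ≤ P ^ (n * (n + 1) / 2) * mkzK P Q n := by
  set C := P ^ (n * (n + 1) / 2) * prodT P Q x n / ((P - Q) ^ n * pqFact P Q n) with hC
  have hPQ : (0:ℝ) < P - Q := by linarith
  have hP : (0:ℝ) < P := hQ.trans hQP
  have hD : 0 < (P - Q) ^ n * pqFact P Q n := mul_pos (by positivity) (pqFact_pos_s12 hQ.le hQP n)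
  have hsum : Summable (fun k => aCoef P Q x n k) := by
    have := summable_aCoef_mul (n := n) hQ hQP hx0 hx1 (fun _ => 1) 1 (by norm_num)
    simpa using this
  have hgeo : Summable (fun k : ℕ => C * x ^ k) := (summable_geometric_of_lt_one hx0 hx1).mul_left _
  calc ∑' k : ℕ, aCoef P Q x n k
      ≤ ∑' k : ℕ, C * x ^ k :=
        Summable.tsum_le_tsum (fun k => aCoef_le hQ hQP hx0 hx1.le n k) hsum hgeo
    _ = C * (1 - x)⁻¹ := by rw [tsum_mul_left, tsum_geometric_of_lt_one hx0 hx1]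
    _ ≤ P ^ (n * (n + 1) / 2) * mkzK P Q n := by
        have hple := prodT_le hQ hQP hP1 hx0 hx1.le n
        have h1x : (0:ℝ) < 1 - x := by linarith
        have hCle : C ≤ P ^ (n * (n + 1) / 2) * ((1 - x) * P ^ (n * (n + 1) / 2))
            / ((P - Q) ^ n * pqFact P Q n) := by
          apply div_le_div_of_nonneg_right _ hD.le
          exact mul_le_mul_of_nonneg_left hple (by positivity)
        calc C * (1 - x)⁻¹
            ≤ (P ^ (n * (n + 1) / 2) * ((1 - x) * P ^ (n * (n + 1) / 2))
                / ((P - Q) ^ n * pqFact P Q n)) * (1 - x)⁻¹ := by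
              exact mul_le_mul_of_nonneg_right hCle (by positivity)
          _ = P ^ (n * (n + 1) / 2) * mkzK P Q n := by
              rw [mkzK]
              field_simp

end Core2
section Core3

variable {P Q : ℝ} {n : ℕ}

lemma mkz_abs_le (hQ : 0 < Q) (hQP : Q < P) (hP1 : P ≤ 1) (f : ℝ → ℝ) (M : ℝ)
    (hM : ∀ t ∈ Set.Icc (0:ℝ) 1, |f t| ≤ M) {x : ℝ} (hx : x ∈ Set.Icc (0:ℝ) 1) :
    |mkz P Q n f x| ≤ M * mkzK P Q n := by
  have hM0 : 0 ≤ M := Mnonneg hM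
  have hK := mkzK_ge_one hQ hQP n
  by_cases hx1 : x = 1
  · subst hx1
    have : mkz P Q n f 1 = f 1 := by unfold mkz; simp
    rw [this]
    calc |f 1| ≤ M := hM 1 (by norm_num)
      _ = M * 1 := (mul_one M).symm
      _ ≤ M * mkzK P Q n := by nlinarith
  · have hx0 : 0 ≤ x := hx.1
    have hxlt : x < 1 := lt_of_le_of_ne hx.2 hx1
    have hP : (0:ℝ) < P := hQ.trans hQP
    rw [mkz_eq P Q x n f hx1]
    have Sf := summable_aCoef_mul (n := n) hQ hQP hx0 hxlt f M hM
    have Sa : Summable (fun k => aCoef P Q x n k) := by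
      have := summable_aCoef_mul (n := n) hQ hQP hx0 hxlt (fun _ => 1) 1 (by norm_num)
      simpa using this
    have h1 : |∑' k : ℕ, aCoef P Q x n k * f (tNode P Q n k)|
        ≤ ∑' k : ℕ, aCoef P Q x n k * M := by
      calc |∑' k : ℕ, aCoef P Q x n k * f (tNode P Q n k)|
          ≤ ∑' k : ℕ, |aCoef P Q x n k * f (tNode P Q n k)| := abs_tsum_le' _ Sf.abs
        _ ≤ ∑' k : ℕ, aCoef P Q x n k * M := by
            apply Summable.tsum_le_tsum _ Sf.abs (Sa.mul_right M)
            intro k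
            rw [abs_mul, abs_of_nonneg (aCoef_nonneg hQ hQP hx0 hxlt.le n k)]
            exact mul_le_mul_of_nonneg_left (hM _ (tNode_mem hQ hQP n k))
              (aCoef_nonneg hQ hQP hx0 hxlt.le n k)
    have h2 : ∑' k : ℕ, aCoef P Q x n k * M
        ≤ (P ^ (n * (n + 1) / 2) * mkzK P Q n) * M := by
      rw [tsum_mul_right]
      exact mul_le_mul_of_nonneg_right (tsum_aCoef_le hQ hQP hP1 hx0 hxlt) hM0
    rw [abs_mul, abs_of_nonneg (by positivity : (0:ℝ) ≤ (P ^ (n * (n + 1) / 2))⁻¹)]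
    calc (P ^ (n * (n + 1) / 2))⁻¹ * |∑' k : ℕ, aCoef P Q x n k * f (tNode P Q n k)|
        ≤ (P ^ (n * (n + 1) / 2))⁻¹ * ((P ^ (n * (n + 1) / 2) * mkzK P Q n) * M) := by
          exact mul_le_mul_of_nonneg_left (h1.trans h2) (by positivity)
      _ = M * mkzK P Q n := by field_simp

set_option maxHeartbeats 2000000 in
lemma mkz_core (hQ : 0 < Q) (hQP : Q < P) (hP1 : P ≤ 1) (f : ℝ → ℝ) (M ε B : ℝ)
    (hM : ∀ t ∈ Set.Icc (0:ℝ) 1, |f t| ≤ M)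
    (hfb : ∀ s ∈ Set.Icc (0:ℝ) 1, ∀ t ∈ Set.Icc (0:ℝ) 1, |f s - f t| ≤ ε + B * (s - t) ^ 2)
    (hε : 0 ≤ ε) (hB : 0 ≤ B) {x : ℝ} (hx : x ∈ Set.Icc (0:ℝ) 1) :
    |mkz P Q n f x - f x|
      ≤ ε + (ε + M + B) * |mkz P Q n (fun t => t ^ 0) x - x ^ 0|
        + 2 * B * |mkz P Q n (fun t => t ^ 1) x - x ^ 1|
        + B * |mkz P Q n (fun t => t ^ 2) x - x ^ 2| := by
  have hM0 : 0 ≤ M := Mnonneg hM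
  have hx0 : 0 ≤ x := hx.1
  have hxle : x ≤ 1 := hx.2
  by_cases hx1 : x = 1
  · subst hx1
    have h0 : mkz P Q n f 1 = f 1 := by unfold mkz; simp
    rw [h0]
    simp only [sub_self, abs_zero]
    have t0 : (0:ℝ) ≤ (ε + M + B) * |mkz P Q n (fun t => t ^ 0) 1 - 1 ^ 0| := by positivity
    have t1 : (0:ℝ) ≤ 2 * B * |mkz P Q n (fun t => t ^ 1) 1 - 1 ^ 1| := by positivity
    have t2 : (0:ℝ) ≤ B * |mkz P Q n (fun t => t ^ 2) 1 - 1 ^ 2| := by positivity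
    linarith
  · have hxlt : x < 1 := lt_of_le_of_ne hxle hx1
    have hP : (0:ℝ) < P := hQ.trans hQP
    set c : ℝ := (P ^ (n * (n + 1) / 2))⁻¹ with hc
    have hc0 : 0 ≤ c := by positivity
    set a : ℕ → ℝ := fun k => aCoef P Q x n k with ha
    set t : ℕ → ℝ := fun k => tNode P Q n k with ht
    have hank : ∀ k, 0 ≤ a k := fun k => aCoef_nonneg hQ hQP hx0 hxlt.le n k
    have htk : ∀ k, t k ∈ Set.Icc (0:ℝ) 1 := fun k => tNode_mem hQ hQP n k
    have hsum : ∀ (g : ℝ → ℝ) (M' : ℝ), (∀ u ∈ Set.Icc (0:ℝ) 1, |g u| ≤ M') →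
        Summable (fun k => a k * g (t k)) :=
      fun g M' hg => summable_aCoef_mul (n := n) hQ hQP hx0 hxlt g M' hg
    have hpow : ∀ i : ℕ, ∀ u ∈ Set.Icc (0:ℝ) 1, |(fun t => t ^ i) u| ≤ 1 := by
      intro i u hu
      rw [abs_pow]
      exact pow_le_one₀ (abs_nonneg u) (abs_le.mpr ⟨by linarith [hu.1], hu.2⟩)
    have S0 : Summable (fun k => a k * (t k) ^ 0) := hsum (fun u => u ^ 0) 1 (hpow 0)
    have S1 : Summable (fun k => a k * (t k) ^ 1) := hsum (fun u => u ^ 1) 1 (hpow 1)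
    have S2 : Summable (fun k => a k * (t k) ^ 2) := hsum (fun u => u ^ 2) 1 (hpow 2)
    have Sf : Summable (fun k => a k * f (t k)) := hsum f M hM
    have Sd : Summable (fun k => a k * (f (t k) - f x)) := hsum (fun u => f u - f x) (2 * M) (by
      intro u hu
      show |f u - f x| ≤ 2 * M
      calc |f u - f x| ≤ |f u| + |f x| := abs_sub _ _
        _ ≤ 2 * M := by linarith [hM u hu, hM x hx])
    have Sq : Summable (fun k => a k * (ε + B * (t k - x) ^ 2)) :=
      hsum (fun u => ε + B * (u - x) ^ 2) (ε + B) (by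
      intro u hu
      show |ε + B * (u - x) ^ 2| ≤ ε + B
      have h1 : (u - x) ^ 2 ≤ 1 := by nlinarith [hu.1, hu.2]
      have h2 : 0 ≤ (u - x) ^ 2 := sq_nonneg _
      rw [abs_of_nonneg (by nlinarith)]
      nlinarith)
    -- notation for operator values
    have hmz : ∀ g : ℝ → ℝ, mkz P Q n g x = c * ∑' k, a k * g (t k) :=
      fun g => mkz_eq P Q x n g hx1
    -- Key 1
    have key1 : (∑' k, a k * f (t k)) - f x * ∑' k, a k * (t k) ^ 0
        = ∑' k, a k * (f (t k) - f x) := by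
      rw [← tsum_mul_left, ← Summable.tsum_sub Sf (S0.mul_left (f x))]
      congr 1
      funext k
      ring
    -- Key 2
    have key2 : |∑' k, a k * (f (t k) - f x)| ≤ ∑' k, a k * (ε + B * (t k - x) ^ 2) := by
      calc |∑' k, a k * (f (t k) - f x)| ≤ ∑' k, |a k * (f (t k) - f x)| :=
            abs_tsum_le' _ Sd.abs
        _ ≤ ∑' k, a k * (ε + B * (t k - x) ^ 2) := by
            apply Summable.tsum_le_tsum _ Sd.abs Sq
            intro k
            rw [abs_mul, abs_of_nonneg (hank k)]
            exact mul_le_mul_of_nonneg_left (hfb _ (htk k) _ hx) (hank k)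
    -- Key 3
    have key3 : (∑' k, a k * (ε + B * (t k - x) ^ 2))
        = (ε + B * x ^ 2) * (∑' k, a k * (t k) ^ 0) + B * (∑' k, a k * (t k) ^ 2)
          - (2 * B * x) * (∑' k, a k * (t k) ^ 1) := by
      rw [← tsum_mul_left, ← tsum_mul_left, ← tsum_mul_left,
        ← Summable.tsum_add (S0.mul_left _) (S2.mul_left _),
        ← Summable.tsum_sub ((S0.mul_left _).add (S2.mul_left _)) (S1.mul_left _)]
      congr 1
      funext k
      ring
    -- operator values on test functions
    have hE0 : mkz P Q n (fun u : ℝ => u ^ 0) x = c * ∑' k, a k * (t k) ^ 0 := hmz _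
    have hE1 : mkz P Q n (fun u : ℝ => u ^ 1) x = c * ∑' k, a k * (t k) ^ 1 := hmz _
    have hE2 : mkz P Q n (fun u : ℝ => u ^ 2) x = c * ∑' k, a k * (t k) ^ 2 := hmz _
    set d0 : ℝ := mkz P Q n (fun u : ℝ => u ^ 0) x - x ^ 0 with hd0
    set d1 : ℝ := mkz P Q n (fun u : ℝ => u ^ 1) x - x ^ 1 with hd1
    set d2 : ℝ := mkz P Q n (fun u : ℝ => u ^ 2) x - x ^ 2 with hd2
    have hτ0 : c * ∑' k, a k * (t k) ^ 0 = x ^ 0 + d0 := by rw [hd0, hE0]; ring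
    have hτ1 : c * ∑' k, a k * (t k) ^ 1 = x ^ 1 + d1 := by rw [hd1, hE1]; ring
    have hτ2 : c * ∑' k, a k * (t k) ^ 2 = x ^ 2 + d2 := by rw [hd2, hE2]; ring
    have main : mkz P Q n f x - f x
        = c * (∑' k, a k * (f (t k) - f x)) + f x * d0 := by
      rw [hmz f, hd0, hE0, ← key1]
      ring
    have habs : |mkz P Q n f x - f x|
        ≤ c * (∑' k, a k * (ε + B * (t k - x) ^ 2)) + M * |d0| := by
      rw [main]
      refine (abs_add_le _ _).trans ?_
      rw [abs_mul, abs_mul, abs_of_nonneg hc0]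
      have h1 : c * |∑' k, a k * (f (t k) - f x)|
          ≤ c * (∑' k, a k * (ε + B * (t k - x) ^ 2)) :=
        mul_le_mul_of_nonneg_left key2 hc0
      have h2 : |f x| * |d0| ≤ M * |d0| :=
        mul_le_mul_of_nonneg_right (hM x hx) (abs_nonneg _)
      linarith
    have hq : c * (∑' k, a k * (ε + B * (t k - x) ^ 2))
        = (ε + B * x ^ 2) * (x ^ 0 + d0) + B * (x ^ 2 + d2) - 2 * B * x * (x ^ 1 + d1) := by
      rw [key3, ← hτ0, ← hτ1, ← hτ2]
      ring
    rw [hq] at habs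
    -- final arithmetic
    have b0 : ε * d0 ≤ ε * |d0| := mul_le_mul_of_nonneg_left (le_abs_self d0) hε
    have hxsq : x ^ 2 ≤ 1 := by nlinarith
    have bx2 : B * x ^ 2 ≤ B := by nlinarith [mul_le_mul_of_nonneg_left hxsq hB]
    have b1 : B * x ^ 2 * d0 ≤ B * |d0| := by
      calc B * x ^ 2 * d0 ≤ B * x ^ 2 * |d0| :=
            mul_le_mul_of_nonneg_left (le_abs_self d0) (by positivity)
        _ ≤ B * |d0| := mul_le_mul_of_nonneg_right bx2 (abs_nonneg _)
    have b2 : B * d2 ≤ B * |d2| := mul_le_mul_of_nonneg_left (le_abs_self d2) hB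
    have b3 : -(2 * B * x * d1) ≤ 2 * B * |d1| := by
      have h1 : 0 ≤ 2 * B * x := mul_nonneg (by linarith) hx0
      have h2 : (2*B*x) * (-d1) ≤ (2*B*x) * |d1| := mul_le_mul_of_nonneg_left (neg_le_abs d1) h1
      have h3 : (2*B*x) * |d1| ≤ (2*B) * |d1| :=
        mul_le_mul_of_nonneg_right (by nlinarith) (abs_nonneg _)
      have h4 : -(2*B*x*d1) = (2*B*x)*(-d1) := by ring
      linarith
    calc |mkz P Q n f x - f x|
        ≤ (ε + B * x ^ 2) * (x ^ 0 + d0) + B * (x ^ 2 + d2) - 2 * B * x * (x ^ 1 + d1)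
          + M * |d0| := habs
      _ = ε + ε * d0 + B * x ^ 2 * d0 + B * d2 - (2 * B * x * d1) + M * |d0| := by ring
      _ ≤ ε + (ε + M + B) * |d0| + 2 * B * |d1| + B * |d2| := by linarith
      _ = ε + (ε + M + B) * |mkz P Q n (fun t => t ^ 0) x - x ^ 0|
          + 2 * B * |mkz P Q n (fun t => t ^ 1) x - x ^ 1|
          + B * |mkz P Q n (fun t => t ^ 2) x - x ^ 2| := by rw [hd0, hd1, hd2]

end Core3
section Sup

lemma le_supNorm {g : ℝ → ℝ} {C : ℝ} (hC : ∀ y ∈ Set.Icc (0:ℝ) 1, |g y| ≤ C)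
    {x : ℝ} (hx : x ∈ Set.Icc (0:ℝ) 1) : |g x| ≤ supNorm g := by
  refine le_csSup ⟨C, ?_⟩ ⟨x, hx, rfl⟩
  rintro _ ⟨y, hy, rfl⟩
  exact hC y hy

lemma supNorm_le {g : ℝ → ℝ} {C : ℝ} (hC : ∀ y ∈ Set.Icc (0:ℝ) 1, |g y| ≤ C) :
    supNorm g ≤ C := by
  refine csSup_le ⟨|g 0|, ⟨0, by norm_num, rfl⟩⟩ ?_
  rintro _ ⟨y, hy, rfl⟩
  exact hC y hy

lemma supNorm_nonneg {g : ℝ → ℝ} {C : ℝ} (hC : ∀ y ∈ Set.Icc (0:ℝ) 1, |g y| ≤ C) :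
    0 ≤ supNorm g :=
  le_trans (abs_nonneg (g 0)) (le_supNorm hC (by norm_num))

-- bound for the test-difference functions
lemma diff_bound (P Q : ℝ) (n : ℕ) (hQ : 0 < Q) (hQP : Q < P) (hP1 : P ≤ 1)
    (g : ℝ → ℝ) (M : ℝ) (hM : ∀ t ∈ Set.Icc (0:ℝ) 1, |g t| ≤ M) :
    ∀ y ∈ Set.Icc (0:ℝ) 1, |mkz P Q n g y - g y| ≤ M * mkzK P Q n + M := by
  intro y hy
  calc |mkz P Q n g y - g y| ≤ |mkz P Q n g y| + |g y| := abs_sub _ _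
    _ ≤ M * mkzK P Q n + M := add_le_add (mkz_abs_le hQ hQP hP1 g M hM hy) (hM y hy)

lemma pow_mem_bound (i : ℕ) : ∀ t ∈ Set.Icc (0:ℝ) 1, |t ^ i| ≤ 1 := by
  intro u hu
  rw [abs_pow]
  exact pow_le_one₀ (abs_nonneg u) (abs_le.mpr ⟨by linarith [hu.1], hu.2⟩)

end Sup
set_option maxHeartbeats 2000000 in
theorem mkz_statistical_korovkin (p q : ℕ → ℝ)
    (h : ∀ n, 0 < q n ∧ q n < p n ∧ p n ≤ 1)
    (hp : Filter.Tendsto p Filter.atTop (nhds 1))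
    (hq : Filter.Tendsto q Filter.atTop (nhds 1))
    (htest : ∀ i : ℕ, i ≤ 2 →
      StatLim (fun n => supNorm (fun x => mkz (p n) (q n) n (fun t => t ^ i) x - x ^ i)) 0)
    (f : ℝ → ℝ) (hf : ContinuousOn f (Set.Icc 0 1)) :
    StatLim (fun n => supNorm (fun x => mkz (p n) (q n) n f x - f x)) 0 := by
  obtain ⟨M, hMn⟩ : ∃ M, ∀ t ∈ Set.Icc (0:ℝ) 1, |f t| ≤ M := by
    obtain ⟨C, hC⟩ := isCompact_Icc.exists_bound_of_continuousOn hf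
    exact ⟨C, fun t ht => by simpa [Real.norm_eq_abs] using hC t ht⟩
  have hM0 : 0 ≤ M := Mnonneg hMn
  intro ε' hε'
  set ε := ε' / 2 with hεdef
  have hεpos : 0 < ε := by positivity
  have huc : UniformContinuousOn f (Set.Icc 0 1) :=
    isCompact_Icc.uniformContinuousOn_of_continuous hf
  rw [Metric.uniformContinuousOn_iff] at huc
  obtain ⟨δ, hδpos, hδ⟩ := huc ε hεpos
  set B := 2 * M / δ ^ 2 with hBdef
  have hB0 : 0 ≤ B := by positivity
  have hfb : ∀ s ∈ Set.Icc (0:ℝ) 1, ∀ t ∈ Set.Icc (0:ℝ) 1,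
      |f s - f t| ≤ ε + B * (s - t) ^ 2 := by
    intro s hs t ht
    by_cases hst : |s - t| < δ
    · have := hδ s hs t ht (by simpa [Real.dist_eq] using hst)
      rw [Real.dist_eq] at this
      nlinarith [sq_nonneg (s - t)]
    · push_neg at hst
      have hsq : δ ^ 2 ≤ (s - t) ^ 2 := by
        rw [← sq_abs (s - t)]
        exact pow_le_pow_left₀ hδpos.le hst 2
      have h2M : |f s - f t| ≤ 2 * M := by
        calc |f s - f t| ≤ |f s| + |f t| := abs_sub _ _
          _ ≤ 2 * M := by linarith [hMn s hs, hMn t ht]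
      have hBs : 2 * M ≤ B * (s - t) ^ 2 := by
        rw [hBdef]
        rw [div_mul_eq_mul_div, le_div_iff₀ (by positivity)]
        nlinarith
      linarith
  -- notation for the four sup-norm sequences
  set F : ℕ → ℝ := fun nn => supNorm (fun x => mkz (p nn) (q nn) nn f x - f x) with hF
  set D : ℕ → ℕ → ℝ := fun i nn =>
    supNorm (fun x => mkz (p nn) (q nn) nn (fun t => t ^ i) x - x ^ i) with hD
  have hDnonneg : ∀ i nn, 0 ≤ D i nn := by
    intro i nn
    obtain ⟨hq1, hq2, hq3⟩ := h nn
    exact supNorm_nonneg (diff_bound _ _ _ hq1 hq2 hq3 _ 1 (pow_mem_bound i))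
  have hFnonneg : ∀ nn, 0 ≤ F nn := by
    intro nn
    obtain ⟨hq1, hq2, hq3⟩ := h nn
    exact supNorm_nonneg (diff_bound _ _ _ hq1 hq2 hq3 f M hMn)
  have hcore : ∀ nn, F nn ≤ ε + (ε + M + B) * D 0 nn + 2 * B * D 1 nn + B * D 2 nn := by
    intro nn
    obtain ⟨hq1, hq2, hq3⟩ := h nn
    apply supNorm_le
    intro y hy
    refine (mkz_core hq1 hq2 hq3 f M ε B hMn hfb hεpos.le hB0 hy).trans ?_
    have g0 : |mkz (p nn) (q nn) nn (fun t => t ^ 0) y - y ^ 0| ≤ D 0 nn :=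
      le_supNorm (diff_bound _ _ _ hq1 hq2 hq3 _ 1 (pow_mem_bound 0)) hy
    have g1 : |mkz (p nn) (q nn) nn (fun t => t ^ 1) y - y ^ 1| ≤ D 1 nn :=
      le_supNorm (diff_bound _ _ _ hq1 hq2 hq3 _ 1 (pow_mem_bound 1)) hy
    have g2 : |mkz (p nn) (q nn) nn (fun t => t ^ 2) y - y ^ 2| ≤ D 2 nn :=
      le_supNorm (diff_bound _ _ _ hq1 hq2 hq3 _ 1 (pow_mem_bound 2)) hy
    have m0 : (ε + M + B) * |mkz (p nn) (q nn) nn (fun t => t ^ 0) y - y ^ 0|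
        ≤ (ε + M + B) * D 0 nn := mul_le_mul_of_nonneg_left g0 (by linarith)
    have m1 : 2 * B * |mkz (p nn) (q nn) nn (fun t => t ^ 1) y - y ^ 1|
        ≤ 2 * B * D 1 nn := mul_le_mul_of_nonneg_left g1 (by linarith)
    have m2 : B * |mkz (p nn) (q nn) nn (fun t => t ^ 2) y - y ^ 2|
        ≤ B * D 2 nn := mul_le_mul_of_nonneg_left g2 hB0
    linarith
  set A := ε + M + 3 * B + 1 with hAdef
  have hApos : 0 < A := by positivity
  set δ' := ε / (3 * A) with hδ'def
  have hδ'pos : 0 < δ' := by positivity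
  have key : ∀ nn, ε' ≤ |F nn - 0| →
      δ' ≤ |D 0 nn - 0| ∨ δ' ≤ |D 1 nn - 0| ∨ δ' ≤ |D 2 nn - 0| := by
    intro nn hnn
    rw [sub_zero, abs_of_nonneg (hFnonneg nn)] at hnn
    by_contra hcon
    push_neg at hcon
    obtain ⟨c0, c1, c2⟩ := hcon
    rw [sub_zero, abs_of_nonneg (hDnonneg 0 nn)] at c0
    rw [sub_zero, abs_of_nonneg (hDnonneg 1 nn)] at c1
    rw [sub_zero, abs_of_nonneg (hDnonneg 2 nn)] at c2
    have e0 : (ε + M + B) * D 0 nn ≤ A * D 0 nn :=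
      mul_le_mul_of_nonneg_right (by linarith) (hDnonneg 0 nn)
    have e1 : 2 * B * D 1 nn ≤ A * D 1 nn :=
      mul_le_mul_of_nonneg_right (by linarith) (hDnonneg 1 nn)
    have e2 : B * D 2 nn ≤ A * D 2 nn :=
      mul_le_mul_of_nonneg_right (by linarith) (hDnonneg 2 nn)
    have f0 : A * D 0 nn < A * δ' := mul_lt_mul_of_pos_left c0 hApos
    have f1 : A * D 1 nn < A * δ' := mul_lt_mul_of_pos_left c1 hApos
    have f2 : A * D 2 nn < A * δ' := mul_lt_mul_of_pos_left c2 hApos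
    have hAδ : A * δ' = ε / 3 := by
      rw [hδ'def]
      field_simp
    have : F nn < ε + ε := by
      have hcn := hcore nn
      rw [hAδ] at f0 f1 f2
      clear_value F D A δ' B ε
      linarith
    have hεε : ε + ε = ε' := by rw [hεdef]; ring
    linarith
  have h0 := htest 0 (by norm_num) δ' hδ'pos
  have h1 := htest 1 (by norm_num) δ' hδ'pos
  have h2 := htest 2 (by norm_num) δ' hδ'pos
  have hsum : Filter.Tendsto (fun N =>
      (((Finset.range (N + 1)).filter (fun k => δ' ≤ |D 0 k - 0|)).card : ℝ) / N
      + (((Finset.range (N + 1)).filter (fun k => δ' ≤ |D 1 k - 0|)).card : ℝ) / N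
      + (((Finset.range (N + 1)).filter (fun k => δ' ≤ |D 2 k - 0|)).card : ℝ) / N)
      Filter.atTop (nhds 0) := by
    simpa only [add_zero] using (h0.add h1).add h2
  apply tendsto_of_tendsto_of_tendsto_of_le_of_le tendsto_const_nhds hsum
  · intro N
    positivity
  · intro N
    have hsub : (Finset.range (N + 1)).filter (fun k => ε' ≤ |F k - 0|)
        ⊆ ((Finset.range (N + 1)).filter (fun k => δ' ≤ |D 0 k - 0|))
          ∪ ((Finset.range (N + 1)).filter (fun k => δ' ≤ |D 1 k - 0|))
          ∪ ((Finset.range (N + 1)).filter (fun k => δ' ≤ |D 2 k - 0|)) := by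
      intro k hk
      rw [Finset.mem_filter] at hk
      rcases key k hk.2 with hc | hc | hc
      · exact Finset.mem_union_left _
          (Finset.mem_union_left _ (Finset.mem_filter.mpr ⟨hk.1, hc⟩))
      · exact Finset.mem_union_left _
          (Finset.mem_union_right _ (Finset.mem_filter.mpr ⟨hk.1, hc⟩))
      · exact Finset.mem_union_right _ (Finset.mem_filter.mpr ⟨hk.1, hc⟩)
    have hcard : ((Finset.range (N + 1)).filter (fun k => ε' ≤ |F k - 0|)).card
        ≤ ((Finset.range (N + 1)).filter (fun k => δ' ≤ |D 0 k - 0|)).card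
          + ((Finset.range (N + 1)).filter (fun k => δ' ≤ |D 1 k - 0|)).card
          + ((Finset.range (N + 1)).filter (fun k => δ' ≤ |D 2 k - 0|)).card := by
      refine (Finset.card_le_card hsub).trans ?_
      refine (Finset.card_union_le _ _).trans ?_
      have := Finset.card_union_le
        ((Finset.range (N + 1)).filter (fun k => δ' ≤ |D 0 k - 0|))
        ((Finset.range (N + 1)).filter (fun k => δ' ≤ |D 1 k - 0|))
      omega
    rcases Nat.eq_zero_or_pos N with hN | hN
    · subst hN
      simp
    · have hNpos : (0:ℝ) < N := by exact_mod_cast hN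
      beta_reduce
      rw [← add_div, ← add_div]
      apply div_le_div_of_nonneg_right ?_ hNpos.le
      exact_mod_cast hcard
end

section
/- For 0 < q < p ≤ 1 and any natural numbers n, k, the ratio p^n [k]_{p,q} / [n+k]_{p,q} lies in [0, 1), and the map k ↦ p^n [k]_{p,q}/[n+k]_{p,q} is monotonically increasing in k. -/
open Filter Topology

theorem mkz_nodes (p q : ℝ) (hq : 0 < q) (hqp : q < p) (hp : p ≤ 1)
    (n : ℕ) (hn : 1 ≤ n) :
    (∀ k : ℕ, p ^ n * pqInt p q k / pqInt p q (n + k) ∈ Set.Ico (0 : ℝ) 1) ∧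
    Monotone (fun k : ℕ => p ^ n * pqInt p q k / pqInt p q (n + k)) := by
  have hp0 : (0:ℝ) < p := hq.trans hqp
  have hpq : p - q ≠ 0 := by linarith
  have hlt : ∀ m : ℕ, 1 ≤ m → q ^ m < p ^ m := fun m hm =>
    pow_lt_pow_left₀ hqp hq.le (by omega)
  have hle : ∀ m : ℕ, q ^ m ≤ p ^ m := fun m => pow_le_pow_left₀ hq.le hqp.le m
  have hdpos : ∀ k : ℕ, 0 < p ^ (n + k) - q ^ (n + k) := fun k =>
    sub_pos.mpr (hlt _ (by omega))
  have hr : ∀ k : ℕ, p ^ n * pqInt p q k / pqInt p q (n + k)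
      = p ^ n * (p ^ k - q ^ k) / (p ^ (n + k) - q ^ (n + k)) := by
    intro k
    have hd := (hdpos k).ne'
    unfold pqInt
    field_simp
  constructor
  · intro k
    rw [hr k]
    constructor
    · apply div_nonneg
      · have := hle k
        nlinarith [pow_pos hp0 n]
      · exact (hdpos k).le
    · rw [div_lt_one (hdpos k)]
      have h1 : q ^ (n + k) < p ^ n * q ^ k := by
        rw [pow_add]
        exact mul_lt_mul_of_pos_right (hlt n hn) (pow_pos hq k)
      have h2 : p ^ n * p ^ k = p ^ (n + k) := (pow_add p n k).symm
      nlinarith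
  · apply monotone_nat_of_le_succ
    intro k
    rw [hr k, hr (k + 1)]
    rw [div_le_div_iff₀ (hdpos k) (hdpos (k + 1))]
    have key : 0 ≤ (p - q) * (p ^ k * q ^ k) * (p ^ n - q ^ n) := by
      apply mul_nonneg
      apply mul_nonneg (by linarith)
      · positivity
      · linarith [hlt n hn]
    have e1 : p ^ (n + k) = p ^ n * p ^ k := pow_add p n k
    have e2 : q ^ (n + k) = q ^ n * q ^ k := pow_add q n k
    have e3 : p ^ (n + (k + 1)) = p ^ n * p ^ k * p := by rw [pow_add, pow_succ]; ring
    have e4 : q ^ (n + (k + 1)) = q ^ n * q ^ k * q := by rw [pow_add, pow_succ]; ring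
    have e5 : p ^ (k + 1) = p ^ k * p := pow_succ p k
    have e6 : q ^ (k + 1) = q ^ k * q := pow_succ q k
    rw [e1, e2, e3, e4, e5, e6]
    nlinarith [mul_nonneg (pow_pos hp0 n).le key]
end

section
/- For 0 < q < p ≤ 1 and x ∈ [0,1), the series Σ_{k=0}^{∞} [n+k choose k]_{p,q} x^k p^{−kn} converges (absolutely) for every natural number n. -/
open Filter Topology

theorem mkz_series_summable (p q : ℝ) (hq : 0 < q) (hqp : q < p) (hp : p ≤ 1)
    (n : ℕ) (x : ℝ) (hx : x ∈ Set.Ico (0 : ℝ) 1) :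
    Summable (fun k : ℕ => pqBinom p q (n + k) k * x ^ k * (p ^ (k * n))⁻¹) := by
  obtain ⟨hx0, hx1⟩ := hx
  have hp0 : 0 < p := hq.trans hqp
  have hpq : 0 < p - q := by linarith
  have hInt : ∀ m : ℕ, 0 < m → 0 < pqInt p q m := by
    intro m hm
    apply div_pos _ hpq
    have : q ^ m < p ^ m := pow_lt_pow_left₀ hqp hq.le (by omega)
    linarith
  have hFact : ∀ m, 0 < pqFact p q m := by
    intro m
    apply Finset.prod_pos
    intro j _
    exact hInt _ (by omega)
  rcases eq_or_lt_of_le hx0 with h0 | hxpos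
  · apply summable_of_ne_finset_zero (s := {0})
    intro k hk
    simp only [Finset.mem_singleton] at hk
    simp [← h0, zero_pow hk]
  · set r : ℝ := q / p with hr
    have hr0 : 0 ≤ r := div_nonneg hq.le hp0.le
    have hr1 : r < 1 := (div_lt_one hp0).mpr hqp
    have hrpow : ∀ m : ℕ, 0 < m → 0 < 1 - r ^ m := by
      intro m hm
      have : r ^ m < 1 := pow_lt_one₀ hr0 hr1 (by omega)
      linarith
    set f : ℕ → ℝ := fun k => pqBinom p q (n + k) k * x ^ k * (p ^ (k * n))⁻¹ with hf
    have hfpos : ∀ k, 0 < f k := by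
      intro k
      refine mul_pos (mul_pos ?_ (pow_pos hxpos k)) (inv_pos.mpr (pow_pos hp0 _))
      exact div_pos (hFact _) (mul_pos (hFact _) (hFact _))
    have hbin : ∀ m : ℕ, pqBinom p q (n + m) m
        = pqFact p q (n + m) / (pqFact p q m * pqFact p q n) := by
      intro m
      simp [pqBinom, Nat.add_sub_cancel]
    have hFsucc : ∀ m : ℕ, pqFact p q (m + 1) = pqFact p q m * pqInt p q (m + 1) := by
      intro m
      simp [pqFact, Finset.prod_range_succ]
    have hstep : ∀ k, f (k + 1)
        = f k * (x * pqInt p q (n + k + 1) / (pqInt p q (k + 1) * p ^ n)) := by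
      intro k
      have h1 : n + (k + 1) = (n + k) + 1 := by omega
      simp only [hf, hbin, h1, hFsucc, pow_succ]
      have e1 : (k + 1) * n = k * n + n := by ring
      rw [e1, pow_add]
      field_simp
    have hratio : ∀ k, ‖f (k + 1)‖ / ‖f k‖
        = x * ((1 - r ^ (n + k + 1)) / (1 - r ^ (k + 1))) := by
      intro k
      rw [Real.norm_eq_abs, Real.norm_eq_abs, abs_of_pos (hfpos _), abs_of_pos (hfpos _),
        hstep k, mul_comm, mul_div_assoc, div_self (hfpos k).ne', mul_one]
      have hd : 1 - r ^ (k + 1) ≠ 0 := (hrpow _ (by omega)).ne'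
      have hqr : q = r * p := by
        rw [hr, div_mul_cancel₀ _ hp0.ne']
      have hr1' : 1 - r ≠ 0 := by
        have := hrpow 1 one_pos
        rw [pow_one] at this
        exact this.ne'
      have hpr : p - r * p ≠ 0 := by
        have : (1 - r) * p ≠ 0 := mul_ne_zero hr1' hp0.ne'
        rw [sub_mul, one_mul] at this
        exact this
      have hnum : p ^ (k + 1) - r ^ (k + 1) * p ^ (k + 1) ≠ 0 := by
        have : (1 - r ^ (k + 1)) * p ^ (k + 1) ≠ 0 :=
          mul_ne_zero hd (pow_ne_zero _ hp0.ne')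
        rw [sub_mul, one_mul] at this
        exact this
      rw [mul_div_assoc]
      congr 1
      rw [show pqInt p q (n + k + 1) = (p ^ (n + k + 1) - r ^ (n + k + 1) * p ^ (n + k + 1)) / (p - r * p) by
            rw [pqInt, hqr, mul_pow], 
          show pqInt p q (k + 1) = (p ^ (k + 1) - r ^ (k + 1) * p ^ (k + 1)) / (p - r * p) by
            rw [pqInt, hqr, mul_pow]]
      rw [div_eq_div_iff (mul_ne_zero (div_ne_zero hnum hpr) (pow_ne_zero _ hp0.ne')) hd]
      field_simp
      ring
    have hlim : Tendsto (fun k => ‖f (k + 1)‖ / ‖f k‖) atTop (𝓝 x) := by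
      have h1 : Tendsto (fun k : ℕ => r ^ (n + k + 1)) atTop (𝓝 0) := by
        have := (tendsto_pow_atTop_nhds_zero_of_lt_one hr0 hr1).const_mul (r ^ (n + 1))
        rw [mul_zero] at this
        refine this.congr fun k => ?_
        rw [← pow_add]
        congr 1
        omega
      have h2 : Tendsto (fun k : ℕ => r ^ (k + 1)) atTop (𝓝 0) := by
        have := (tendsto_pow_atTop_nhds_zero_of_lt_one hr0 hr1).const_mul r
        rw [mul_zero] at this
        refine this.congr fun k => ?_
        rw [← pow_succ']
      have : Tendsto (fun k => x * ((1 - r ^ (n + k + 1)) / (1 - r ^ (k + 1)))) atTop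
          (𝓝 (x * ((1 - 0) / (1 - 0)))) := by
        exact Tendsto.const_mul x
          (((tendsto_const_nhds.sub h1).div (tendsto_const_nhds.sub h2) (by norm_num)))
      simp only [sub_zero, div_one, mul_one] at this
      exact Tendsto.congr (fun k => (hratio k).symm) this
    exact summable_of_ratio_test_tendsto_lt_one hx1
      (Filter.Eventually.of_forall fun k => (hfpos k).ne') hlim
end
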